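/- arXiv:2512.17683 — 4 statements merged into one kernel-verified Lean document; each statement's English description precedes it below -/
import Mathlib

section
/- Let a, b, c be three pairwise distinct letters and let u = abcacbc. For every integer n ≥ 6, the following sequence over the alphabet {1,…,n} is u-saturated: the blocks 1,2,k for k = n, n−1, …, 3 (in decreasing order of k), followed by the block 1,2,3 once more, followed by 1,2, followed by the decreasing run n, n−1, …, 5, 4, followed by the increasing run 6, 7, …, n. -/
/-- `v` is a *copy* of `u`: it is obtained from `u` by an injective renaming of letters. -/
def IsCopy {α β : Type*} (v : List β) (u : List α) : Prop :=
  ∃ f : α → β, (∀ x ∈ u, ∀ y ∈ u, f x = f y → x = y) ∧ v = u.map f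

/-- `s` contains a copy of `u` as a (not necessarily contiguous) subsequence. -/
def ContainsCopy {α β : Type*} (s : List β) (u : List α) : Prop :=
  ∃ v : List β, v.Sublist s ∧ IsCopy v u

/-- `s` is `r`-sparse: any `r` consecutive letters of `s` are pairwise distinct. -/
def Sparse {A : Type*} (r : ℕ) (s : List A) : Prop :=
  ∀ (i j : ℕ) (hij : i < j) (hj : j < s.length), j < i + r →
    s.get ⟨i, hij.trans hj⟩ ≠ s.get ⟨j, hj⟩

/-- `s` is a `u`-saturated sequence over the alphabet `alphabet`:
`s` uses letters from `alphabet`, is `r`-sparse (where `r` is the number of distinct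
letters of `u`), avoids `u`, and inserting any letter of `alphabet` at any position
violates `r`-sparsity or creates a copy of `u`. -/
def Saturated {α A : Type*} [DecidableEq α] (u : List α) (s : List A) (alphabet : Set A) : Prop :=
  Sparse u.toFinset.card s ∧ ¬ ContainsCopy s u ∧ (∀ x ∈ s, x ∈ alphabet) ∧
  ∀ x ∈ alphabet, ∀ i ≤ s.length,
    ¬ Sparse u.toFinset.card (s.insertIdx i x) ∨ ContainsCopy (s.insertIdx i x) u

/-- The explicit candidate saturated sequence for `u = abcacbc` over the alphabet `{1,…,n}`:
blocks `1,2,k` for `k = n, n-1, …, 3`, then `1,2,3` once more, then `1,2`,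
then the decreasing run `n, n-1, …, 5, 4`, then the increasing run `6, 7, …, n`. -/
def abcacbcSeq (n : ℕ) : List ℕ :=
  ((List.range (n - 2)).flatMap (fun i => [1, 2, n - i])) ++
    [1, 2, 3] ++ [1, 2] ++
    ((List.range (n - 3)).map (fun i => n - i)) ++
    ((List.range (n - 5)).map (fun i => 6 + i))

open List


/-- blocks [1,2,n], [1,2,n-1], ..., m blocks -/
def Ql (m n : ℕ) : List ℕ := (List.range m).flatMap (fun i => [1, 2, n - i])
/-- decreasing run n, n-1, ..., m values -/
def Rl (m n : ℕ) : List ℕ := (List.range m).map (fun i => n - i)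
/-- increasing run k, k+1, ..., m values -/
def Tl (m k : ℕ) : List ℕ := (List.range m).map (fun i => k + i)

lemma Ql_add (a b n : ℕ) : Ql (a + b) n = Ql a n ++ Ql b (n - a) := by
  simp only [Ql, range_add, flatMap_append, flatMap_map]
  congr 1
  congr 1
  funext i
  simp [Nat.sub_sub]

lemma Rl_add (a b n : ℕ) : Rl (a + b) n = Rl a n ++ Rl b (n - a) := by
  simp only [Rl, range_add, map_append, map_map]
  congr 1
  congr 1
  funext i
  simp [Nat.sub_sub, Function.comp]

lemma Tl_add (a b k : ℕ) : Tl (a + b) k = Tl a k ++ Tl b (k + a) := by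
  simp only [Tl, range_add, map_append, map_map]
  congr 1
  congr 1
  funext i
  simp [Function.comp]; omega

lemma Ql_one (n : ℕ) : Ql 1 n = [1, 2, n] := by simp [Ql, List.range_succ]

lemma Rl_one (n : ℕ) : Rl 1 n = [n] := by simp [Rl, List.range_succ]

lemma Tl_one (k : ℕ) : Tl 1 k = [k] := by simp [Tl, List.range_succ]

lemma Ql_zero (n : ℕ) : Ql 0 n = [] := by simp [Ql]
lemma Rl_zero (n : ℕ) : Rl 0 n = [] := by simp [Rl]
lemma Tl_zero (k : ℕ) : Tl 0 k = [] := by simp [Tl]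

lemma Ql_succ (m n : ℕ) : Ql (1 + m) n = [1, 2, n] ++ Ql m (n - 1) := by
  rw [Ql_add, Ql_one]

lemma Rl_succ (m n : ℕ) : Rl (1 + m) n = n :: Rl m (n - 1) := by
  rw [Rl_add, Rl_one]; rfl

lemma Tl_succ (m k : ℕ) : Tl (1 + m) k = k :: Tl m (k + 1) := by
  rw [Tl_add, Tl_one]; rfl

lemma length_Ql (m n : ℕ) : (Ql m n).length = 3 * m := by
  induction m generalizing n with
  | zero => simp [Ql]
  | succ m ih =>
      have : m + 1 = 1 + m := by omega
      rw [this, Ql_succ]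
      simp [ih]; omega

lemma length_Rl (m n : ℕ) : (Rl m n).length = m := by simp [Rl]
lemma length_Tl (m k : ℕ) : (Tl m k).length = m := by simp [Tl]

lemma mem_Ql' {y m n : ℕ} (h : y ∈ Ql m n) (hm : m ≤ n) :
    y = 1 ∨ y = 2 ∨ (n - m < y ∧ y ≤ n) := by
  simp only [Ql, mem_flatMap, mem_range] at h
  obtain ⟨i, hi, hy⟩ := h
  simp at hy
  rcases hy with h | h | h <;> omega

lemma mem_Rl' {y m n : ℕ} (h : y ∈ Rl m n) (hm : m ≤ n) : n - m < y ∧ y ≤ n := by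
  simp only [Rl, mem_map, mem_range] at h
  obtain ⟨i, hi, hy⟩ := h; omega

lemma mem_Tl' {y m k : ℕ} (h : y ∈ Tl m k) : k ≤ y ∧ y < k + m := by
  simp only [Tl, mem_map, mem_range] at h
  obtain ⟨i, hi, hy⟩ := h; omega

lemma mem_Rl {y m n : ℕ} (hm : m ≤ n) (h1 : n - m < y) (h2 : y ≤ n) : y ∈ Rl m n := by
  simp only [Rl, mem_map, mem_range]
  exact ⟨n - y, by omega, by omega⟩

lemma mem_Tl {y m k : ℕ} (h1 : k ≤ y) (h2 : y < k + m) : y ∈ Tl m k := by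
  simp only [Tl, mem_map, mem_range]
  exact ⟨y - k, by omega, by omega⟩

lemma pairwise_Tl (m k : ℕ) : (Tl m k).Pairwise (· < ·) := by
  induction m generalizing k with
  | zero => simp [Tl]
  | succ m ih =>
      have : m + 1 = 1 + m := by omega
      rw [this, Tl_succ]
      exact List.Pairwise.cons (fun y hy => (mem_Tl' hy).1.trans_lt' (by omega)) (ih (k+1))
-- counts
lemma count_Ql {y m n : ℕ} (h1 : y ≠ 1) (h2 : y ≠ 2) (hm : m ≤ n) :
    count y (Ql m n) = if n - m < y ∧ y ≤ n then 1 else 0 := by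
  induction m generalizing n with
  | zero => simp [Ql_zero]
  | succ m ih =>
      have h1 : m + 1 = 1 + m := by omega
      rw [h1, Ql_succ, count_append]
      rw [ih (by omega)]
      have : count y [1, 2, n] = if y = n then 1 else 0 := by
        simp [count_cons, beq_iff_eq]
        split_ifs <;> omega
      rw [this]
      split_ifs <;> omega

lemma count_Rl {y m n : ℕ} (hm : m ≤ n) :
    count y (Rl m n) = if n - m < y ∧ y ≤ n then 1 else 0 := by
  induction m generalizing n with
  | zero => simp [Rl_zero]
  | succ m ih =>
      have h1 : m + 1 = 1 + m := by omega
      rw [h1, Rl_succ, count_cons, ih (by omega)]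
      simp only [beq_iff_eq]
      split_ifs <;> omega

lemma count_Tl {y m k : ℕ} : count y (Tl m k) = if k ≤ y ∧ y < k + m then 1 else 0 := by
  induction m generalizing k with
  | zero => simp [Tl_zero]
  | succ m ih =>
      have h1 : m + 1 = 1 + m := by omega
      rw [h1, Tl_succ, count_cons, ih]
      simp only [beq_iff_eq]
      split_ifs <;> omega

-- window-3 predicate
def Win3 (s : List ℕ) : Prop := ∀ t, t <:+ s → (t.take 3).Pairwise (· ≠ ·)

lemma win3_nil : Win3 [] := by
  intro t ht
  simp [List.suffix_nil] at ht
  simp [ht]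

lemma win3_cons {x : ℕ} {l : List ℕ}
    (h1 : ((x :: l).take 3).Pairwise (· ≠ ·)) (h2 : Win3 l) : Win3 (x :: l) := by
  intro t ht
  rcases List.suffix_cons_iff.mp ht with h | h
  · rw [h]; exact h1
  · exact h2 t h

lemma win3_self {s : List ℕ} (h : Win3 s) : (s.take 3).Pairwise (· ≠ ·) :=
  h s (List.suffix_refl s)

lemma win3_of_pairwise {l : List ℕ} (h : l.Pairwise (· ≠ ·)) : Win3 l := by
  intro t ht
  exact h.sublist ((List.take_prefix 3 t).sublist.trans ht.sublist)

lemma sparse_of_win3 {s : List ℕ} (h : Win3 s) : Sparse 3 s := by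
  intro i j hij hj hlt
  have hsuf : s.drop i <:+ s := List.drop_suffix i s
  have hp := h _ hsuf
  have hi' : i < s.length := hij.trans hj
  have hlen : ((s.drop i).take 3).length = min 3 (s.length - i) := by
    simp [List.length_take, List.length_drop]
  have h0 : 0 < ((s.drop i).take 3).length := by omega
  have hji : j - i < ((s.drop i).take 3).length := by omega
  have e0 : ((s.drop i).take 3)[0] = s[i] := by
    rw [List.getElem_take, List.getElem_drop]
    congr 1
  have e1 : ((s.drop i).take 3)[j - i] = s[j] := by
    rw [List.getElem_take, List.getElem_drop]
    congr 1
    omega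
  have := (List.pairwise_iff_getElem.mp hp) 0 (j - i) h0 hji (by omega)
  rw [e0, e1] at this
  simpa [List.get_eq_getElem] using this

-- insertIdx characterization
lemma insertIdx_eq {α : Type*} (x : α) : ∀ (i : ℕ) (l : List α), i ≤ l.length →
    l.insertIdx i x = l.take i ++ x :: l.drop i := by
  intro i
  induction i with
  | zero => intro l _; simp
  | succ i ih =>
      intro l hl
      cases l with
      | nil => simp at hl
      | cons a t =>
          simp only [List.insertIdx_succ_cons, List.take_succ_cons, List.drop_succ_cons,
            List.cons_append]
          rw [ih t (by simpa using hl)]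

-- not sparse builders
lemma not_sparse_pair {x : ℕ} {U V W : List ℕ} (hV : V.length ≤ 1) :
    ¬ Sparse 3 ((U ++ x :: V) ++ x :: W) := by
  intro hs
  have hij : U.length < U.length + V.length + 1 := by omega
  have hjlen : U.length + V.length + 1 < ((U ++ x :: V) ++ x :: W).length := by
    simp; omega
  have e1 : ((U ++ x :: V) ++ x :: W)[U.length]'(by simp) = x := by
    rw [List.getElem_append_left (by simp)]
    rw [List.getElem_append_right (le_refl _)]
    simp
  have e2 : ((U ++ x :: V) ++ x :: W)[U.length + V.length + 1]'(by simp; omega) = x := by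
    rw [List.getElem_append_right (by simp; omega)]
    have : U.length + V.length + 1 - (U ++ x :: V).length = 0 := by simp
    simp only [this]
    simp
  have := hs U.length (U.length + V.length + 1) hij hjlen (by omega)
  rw [List.get_eq_getElem, List.get_eq_getElem, e1, e2] at this
  exact this rfl

lemma not_sparse_insert {s : List ℕ} {x : ℕ} {A B : List ℕ} (hs : s = A ++ x :: B) {i : ℕ}
    (h1 : A.length ≤ i + 1) (h2 : i ≤ A.length + 2) (hi : i ≤ s.length) :
    ¬ Sparse 3 (s.insertIdx i x) := by
  rw [insertIdx_eq x i s hi]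
  rcases le_or_gt i A.length with h | h
  · rw [hs, List.take_append_of_le_length h, List.drop_append_of_le_length h]
    have hV : (A.drop i).length ≤ 1 := by simp [List.length_drop]; omega
    have hsh : A.take i ++ x :: (A.drop i ++ x :: B) =
        (A.take i ++ x :: A.drop i) ++ x :: B := by simp
    rw [hsh]
    exact not_sparse_pair hV
  · have hs2 : s = (A ++ [x]) ++ B := by rw [hs]; simp
    have htake : s.take i = (A ++ [x]) ++ B.take (i - (A.length + 1)) := by
      rw [hs2, List.take_append, List.take_of_length_le (by simp; omega)]
      congr 2
      simp
    have hdrop : s.drop i = B.drop (i - (A.length + 1)) := by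
      rw [hs2, List.drop_append, List.drop_eq_nil_of_le (by simp; omega)]
      simp
    rw [htake, hdrop]
    have hsh : (A ++ [x]) ++ B.take (i - (A.length + 1)) ++ x :: B.drop (i - (A.length + 1)) =
        (A ++ x :: B.take (i - (A.length + 1))) ++ x :: B.drop (i - (A.length + 1)) := by
      simp
    rw [hsh]
    apply not_sparse_pair
    simp [List.length_take]; omega
-- copy builders
lemma containsCopy_pqr {α : Type*} [DecidableEq α] {a b c : α} (hab : a ≠ b) (hac : a ≠ c)
    (hbc : b ≠ c) {t : List ℕ} {p q r : ℕ} (hpq : p ≠ q) (hpr : p ≠ r) (hqr : q ≠ r)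
    (h : [p, q, r, p, r, q, r] <+ t) : ContainsCopy t [a, b, c, a, c, b, c] := by
  refine ⟨[p, q, r, p, r, q, r], h, fun y => if y = a then p else if y = b then q else r, ?_, ?_⟩
  · intro u hu v hv huv
    have hu' : u = a ∨ u = b ∨ u = c := by
      simp only [mem_cons, not_mem_nil, or_false] at hu; tauto
    have hv' : v = a ∨ v = b ∨ v = c := by
      simp only [mem_cons, not_mem_nil, or_false] at hv; tauto
    rcases hu' with rfl|rfl|rfl <;> rcases hv' with rfl|rfl|rfl <;>
      first
        | rfl
        | (simp [hab, hac, hbc, Ne.symm hab, Ne.symm hac, Ne.symm hbc] at huv;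
           first
             | (exact absurd huv hpq) | (exact absurd huv hpr) | (exact absurd huv hqr)
             | (exact absurd huv.symm hpq) | (exact absurd huv.symm hpr)
             | (exact absurd huv.symm hqr))
  · simp [Ne.symm hab, Ne.symm hac, Ne.symm hbc]

lemma sub_take_mono {s u : List ℕ} {d i : ℕ} (h : u <+ s.take d) (hdi : d ≤ i) :
    u <+ s.take i := by
  have he : s.take d = (s.take i).take d := by rw [List.take_take]; congr 1; omega
  rw [he] at h
  exact h.trans (List.take_prefix d (s.take i)).sublist

lemma sub_drop_mono {s u : List ℕ} {e i : ℕ} (h : u <+ s.drop e) (hie : i ≤ e) :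
    u <+ s.drop i := by
  have he : s.drop e = (s.drop i).drop (e - i) := by rw [List.drop_drop]; congr 1; omega
  rw [he] at h
  exact h.trans (List.drop_suffix (e - i) (s.drop i)).sublist

lemma copy_insert {α : Type*} [DecidableEq α] {a b c : α} (hab : a ≠ b) (hac : a ≠ c)
    (hbc : b ≠ c) {s : List ℕ} {x : ℕ} {i : ℕ} (hi : i ≤ s.length) {u₁ u₂ : List ℕ}
    {p q r : ℕ} (hpq : p ≠ q) (hpr : p ≠ r) (hqr : q ≠ r)
    (hpat : u₁ ++ x :: u₂ = [p, q, r, p, r, q, r])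
    (h1 : u₁ <+ s.take i) (h2 : u₂ <+ s.drop i) :
    ContainsCopy (s.insertIdx i x) [a, b, c, a, c, b, c] := by
  apply containsCopy_pqr hab hac hbc hpq hpr hqr
  rw [insertIdx_eq x i s hi, ← hpat]
  exact h1.append (h2.cons₂ x)

-- sequence structure
lemma seq_eq (n : ℕ) : abcacbcSeq n =
    Ql (n-2) n ++ ([1,2,3] ++ ([1,2] ++ (Rl (n-3) n ++ Tl (n-5) 6))) := by
  simp [abcacbcSeq, Ql, Rl, Tl, List.append_assoc]

lemma len_seq {n : ℕ} (hn : 6 ≤ n) : (abcacbcSeq n).length = 5*n - 9 := by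
  rw [seq_eq]
  simp [length_Ql, length_Rl, length_Tl]
  omega

lemma PdecL {v m : ℕ} (h3 : 3 ≤ v) (hvm : v ≤ m) :
    Ql (m-2) m = Ql (m-v) m ++ ([1,2,v] ++ Ql (v-3) (v-1)) := by
  rw [show m-2 = (m-v) + (1 + (v-3)) by omega, Ql_add, Ql_add, Ql_one]
  rw [show m - (m-v) = v by omega]

lemma Pdec2 {a b m : ℕ} (h3 : 3 ≤ b) (hba : b < a) (ham : a ≤ m) :
    Ql (m-2) m = Ql (m-a) m ++ ([1,2,a] ++ (Ql (a-1-b) (a-1) ++ ([1,2,b] ++ Ql (b-3) (b-1)))) := by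
  rw [PdecL (by omega) ham]
  rw [show a - 3 = (a-1) - 2 by omega, PdecL h3 (by omega)]

lemma RdecL {v m : ℕ} (h3 : 3 ≤ v) (hvm : v ≤ m) :
    Rl (m-3) m = Rl (m-v) m ++ Rl (v-3) v := by
  rw [show m-3 = (m-v) + (v-3) by omega, Rl_add, show m - (m-v) = v by omega]

lemma Rl_cons {v : ℕ} (h : 4 ≤ v) : Rl (v-3) v = v :: Rl (v-4) (v-1) := by
  rw [show v-3 = 1 + (v-4) by omega, Rl_succ]

lemma TdecL {w n : ℕ} (h6 : 6 ≤ w) (hw : w ≤ n+1) :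
    Tl (n-5) 6 = Tl (w-6) 6 ++ Tl (n+1-w) w := by
  rw [show n-5 = (w-6) + (n+1-w) by omega, Tl_add, show 6 + (w-6) = w by omega]

lemma Tl_cons {w n : ℕ} (hw : w ≤ n) : Tl (n+1-w) w = w :: Tl (n-w) (w+1) := by
  rw [show n+1-w = 1 + (n-w) by omega, Tl_succ]

lemma Ql_cons3' (m n : ℕ) : Ql (1+m) n = 1 :: 2 :: n :: Ql m (n-1) := by
  rw [Ql_succ]; rfl

lemma Ql_cons3 {m n : ℕ} (h : 1 ≤ m) : Ql m n = 1 :: 2 :: n :: Ql (m-1) (n-1) := by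
  have := Ql_cons3' (m-1) n
  rw [show 1 + (m-1) = m by omega] at this
  exact this

-- membership conjunct
lemma mem_seq {n : ℕ} (hn : 6 ≤ n) : ∀ x ∈ abcacbcSeq n, x ∈ Set.Icc 1 n := by
  intro x hx
  rw [seq_eq] at hx
  simp only [mem_append, mem_cons, not_mem_nil, or_false] at hx
  simp only [Set.mem_Icc]
  have h2 : x ∈ Ql (n-2) n ∨ x = 1 ∨ x = 2 ∨ x = 3 ∨ x ∈ Rl (n-3) n ∨ x ∈ Tl (n-5) 6 := by
    tauto
  rcases h2 with h | h | h | h | h | h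
  · rcases mem_Ql' h (by omega) with h|h|h <;> omega
  · omega
  · omega
  · omega
  · have := mem_Rl' h (by omega); omega
  · have := mem_Tl' h; omega

-- toFinset card
lemma card_u {α : Type*} [DecidableEq α] {a b c : α} (hab : a ≠ b) (hac : a ≠ c) (hbc : b ≠ c) :
    ([a,b,c,a,c,b,c] : List α).toFinset.card = 3 := by
  have h : ([a,b,c,a,c,b,c] : List α).toFinset = {a, b, c} := by
    ext y; simp; try tauto
  rw [h]
  rw [Finset.card_insert_of_notMem (by simp [hab, hac]),
      Finset.card_insert_of_notMem (by simp [hbc]), Finset.card_singleton]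
lemma pairwise_take2 {l : List ℕ} (h : Win3 l) : (l.take 2).Pairwise (· ≠ ·) := by
  have h3 := win3_self h
  have h2 : l.take 2 = (l.take 3).take 2 := by rw [List.take_take]; norm_num
  rw [h2]
  exact h3.sublist (List.take_prefix 2 (l.take 3)).sublist

lemma win3_DI {n : ℕ} (hn : 6 ≤ n) : ∀ m, m ≤ n - 3 → Win3 (Rl m (m+3) ++ Tl (n-5) 6) := by
  intro m
  induction m with
  | zero =>
      intro _
      rw [Rl_zero, List.nil_append]
      exact win3_of_pairwise ((pairwise_Tl _ _).imp (fun h => Nat.ne_of_lt h))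
  | succ m ih =>
      intro hm
      have hr : Rl (m+1) (m+1+3) = (m+4) :: Rl m (m+3) := by
        rw [show m+1+3 = m+4 by omega, show m+1 = 1+m by omega, Rl_succ]
        norm_num
      rw [hr, List.cons_append]
      have hW : Win3 (Rl m (m+3) ++ Tl (n-5) 6) := ih (by omega)
      apply win3_cons _ hW
      have ht : ((m+4) :: (Rl m (m+3) ++ Tl (n-5) 6)).take 3
          = (m+4) :: (Rl m (m+3) ++ Tl (n-5) 6).take 2 := by
        simp [List.take_succ_cons]
      rw [ht, List.pairwise_cons]
      constructor
      · intro y hy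
        rcases le_or_gt 2 m with h2 | h2
        · rw [List.take_append_of_le_length (by rw [length_Rl]; omega)] at hy
          have hy' : y ∈ Rl m (m+3) := (List.take_sublist 2 _).subset hy
          have := mem_Rl' hy' (by omega)
          omega
        · have hy' : y ∈ Rl m (m+3) ++ Tl (n-5) 6 := (List.take_sublist 2 _).subset hy
          rcases List.mem_append.mp hy' with h | h
          · have := mem_Rl' h (by omega); omega
          · have := mem_Tl' h; omega
      · exact pairwise_take2 hW

lemma win3_MDI {n : ℕ} (hn : 6 ≤ n) :
    Win3 ([1,2,3] ++ ([1,2] ++ (Rl (n-3) n ++ Tl (n-5) 6))) := by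
  have hDI : Win3 (Rl (n-3) n ++ Tl (n-5) 6) := by
    have := win3_DI hn (n-3) le_rfl
    rw [show n-3+3 = n by omega] at this
    exact this
  have hD3 : Rl (n-3) n ++ Tl (n-5) 6 = n :: ((n-1) :: (Rl (n-5) (n-2) ++ Tl (n-5) 6)) := by
    rw [Rl_cons (by omega), show n-4 = 1+(n-5) by omega, Rl_succ, show n-1-1 = n-2 by omega]
    simp
  rw [hD3] at hDI ⊢
  show Win3 (1 :: 2 :: 3 :: 1 :: 2 :: (n :: ((n-1) :: (Rl (n-5) (n-2) ++ Tl (n-5) 6))))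
  apply win3_cons (by simp [List.take_succ_cons]; try omega)
  apply win3_cons (by simp [List.take_succ_cons]; try omega)
  apply win3_cons (by simp [List.take_succ_cons]; try omega)
  apply win3_cons (by simp [List.take_succ_cons]; try omega)
  apply win3_cons (by simp [List.take_succ_cons]; try omega)
  exact hDI

lemma win3_seq {n : ℕ} (hn : 6 ≤ n) : Win3 (abcacbcSeq n) := by
  set T := [1,2,3] ++ ([1,2] ++ (Rl (n-3) n ++ Tl (n-5) 6)) with hT
  have headQT : ∀ m, ∃ Z : List ℕ, Ql m (m+2) ++ T = 1 :: 2 :: Z := by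
    intro m
    cases m with
    | zero => exact ⟨3 :: ([1,2] ++ (Rl (n-3) n ++ Tl (n-5) 6)), by simp [Ql_zero, hT]⟩
    | succ m =>
        refine ⟨(m+3) :: (Ql m (m+2) ++ T), ?_⟩
        rw [show m+1 = 1+m by omega, Ql_cons3']
        simp [show m+1+2-1 = m+2 by omega, show 1+m+2 = m+3 by omega]
  have main : ∀ m, Win3 (Ql m (m+2) ++ T) := by
    intro m
    induction m with
    | zero => rw [Ql_zero, List.nil_append]; exact win3_MDI hn
    | succ m ih =>
        have hq : Ql (m+1) (m+1+2) = 1 :: 2 :: (m+3) :: Ql m (m+2) := by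
          rw [show m+1+2 = m+3 by omega, show m+1 = 1+m by omega, Ql_cons3']
          norm_num
        rw [hq]
        obtain ⟨Z, hZ⟩ := headQT m
        show Win3 (1 :: 2 :: (m+3) :: (Ql m (m+2) ++ T))
        rw [hZ]
        apply win3_cons (by simp [List.take_succ_cons]; try omega)
        apply win3_cons (by simp [List.take_succ_cons]; try omega)
        apply win3_cons (by simp [List.take_succ_cons]; try omega)
        rw [← hZ]
        exact ih
  have := main (n-2)
  rw [show n-2+2 = n by omega] at this
  rw [seq_eq]
  exact this

lemma sparse_seq {n : ℕ} (hn : 6 ≤ n) : Sparse 3 (abcacbcSeq n) :=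
  sparse_of_win3 (win3_seq hn)
-- small unification lemmas
lemma unif_head {x : ℕ} {t l₁ l₂ : List ℕ} (h : l₁ ++ l₂ = x :: t) (hx : x ∉ l₁) :
    l₁ = [] := by
  cases l₁ with
  | nil => rfl
  | cons y l => simp_all

lemma unif3 {x y : ℕ} {t l₁ l₂ : List ℕ} (h : l₁ ++ l₂ = x :: y :: t) (hy : y ∉ l₁) :
    l₁ = [] ∨ (l₁ = [x] ∧ l₂ = y :: t) := by
  rcases l₁ with _ | ⟨a, _ | ⟨b, l⟩⟩ <;> simp_all

lemma unif1 {p q r : ℕ} (hpr : p ≠ r) (hqr : q ≠ r) {l₁ l₂ : List ℕ}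
    (h : l₁ ++ r :: l₂ = [p,q,r,p,r,q,r]) (hr : r ∉ l₁) :
    l₁ = [p,q] ∧ l₂ = [p,r,q,r] := by
  rcases l₁ with _ | ⟨a1, _ | ⟨a2, _ | ⟨a3, l⟩⟩⟩ <;> simp_all

lemma unif2 {p q r : ℕ} (hpr : p ≠ r) {l₁ l₂ : List ℕ}
    (h : l₁ ++ r :: l₂ = [p,r,q,r]) (hr : r ∉ l₁) :
    l₁ = [p] ∧ l₂ = [q,r] := by
  rcases l₁ with _ | ⟨a1, _ | ⟨a2, l⟩⟩ <;> simp_all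

lemma sub_single {x : ℕ} {l : List ℕ} (h : l <+ [x]) : l = [] ∨ l = [x] := by
  cases h with
  | cons _ h' => exact Or.inl (List.sublist_nil.mp h')
  | cons_cons _ h' => exact Or.inr (by rw [List.sublist_nil.mp h'])

lemma avoid_seq {α : Type*} [DecidableEq α] {a b c : α} (hab : a ≠ b) (hac : a ≠ c)
    (hbc : b ≠ c) {n : ℕ} (hn : 6 ≤ n) :
    ¬ ContainsCopy (abcacbcSeq n) [a, b, c, a, c, b, c] := by
  rintro ⟨v, hsub, f, hinj, hv⟩
  rw [hv] at hsub
  simp only [List.map_cons, List.map_nil] at hsub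
  set p := f a with hp
  set q := f b with hq
  set r := f c with hr
  have hpq : p ≠ q := fun h => hab (hinj a (by simp) b (by simp) h)
  have hpr : p ≠ r := fun h => hac (hinj a (by simp) c (by simp) h)
  have hqr : q ≠ r := fun h => hbc (hinj b (by simp) c (by simp) h)
  clear hv hinj
  -- counts of r in the pattern
  have hcv : count r [p,q,r,p,r,q,r] = 3 := by
    simp [List.count_cons, hpr, hqr]
  have hcount : 3 ≤ count r (abcacbcSeq n) := by
    rw [← hcv]; exact hsub.count_le r
  -- r is 1, 2 or in [6, n]
  have hrange : r = 1 ∨ r = 2 ∨ (6 ≤ r ∧ r ≤ n) := by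
    by_contra hcon
    push_neg at hcon
    obtain ⟨hr1, hr2, hr6⟩ := hcon
    rw [seq_eq] at hcount
    simp only [count_append] at hcount
    rw [count_Ql hr1 hr2 (by omega), count_Rl (by omega), count_Tl] at hcount
    have h123 : count r [1,2,3] = if r = 3 then 1 else 0 := by
      simp [List.count_cons, hr1, hr2]
      split_ifs <;> omega
    have h12 : count r [1,2] = 0 := by
      simp [List.count_cons, hr1, hr2, Ne.symm hr1, Ne.symm hr2]
    rw [h123, h12] at hcount
    split_ifs at hcount <;> omega
  rcases hrange with hr1 | hr1 | ⟨hr6, hrn⟩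
  case _ | _ =>
    -- r ∈ {1,2} : the copy lives in the prefix part
    all_goals {
    have hdec : abcacbcSeq n =
        (Ql (n-2) n ++ ([1,2,3] ++ [1,2])) ++ (Rl (n-3) n ++ Tl (n-5) 6) := by
      rw [seq_eq]; simp
    rw [hdec] at hsub
    obtain ⟨v₁, v₂, hveq, h1, h2⟩ := List.sublist_append_iff.mp hsub
    have hrpost : count r (Rl (n-3) n ++ Tl (n-5) 6) = 0 := by
      rw [count_append, count_Rl (by omega), count_Tl]
      split_ifs <;> omega
    have hrv2 : r ∉ v₂ := by
      intro hmem
      have := h2.count_le r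
      rw [hrpost] at this
      have := List.count_pos_iff.mpr hmem
      omega
    have hsuf : v₂ <:+ [p,q,r,p,r,q,r] := ⟨v₁, hveq.symm⟩
    have hv2nil : v₂ = [] := by
      rw [List.suffix_cons_iff] at hsuf
      rcases hsuf with h | hsuf
      · exact absurd (by rw [h]; simp) hrv2
      rw [List.suffix_cons_iff] at hsuf
      rcases hsuf with h | hsuf
      · exact absurd (by rw [h]; simp) hrv2
      rw [List.suffix_cons_iff] at hsuf
      rcases hsuf with h | hsuf
      · exact absurd (by rw [h]; simp) hrv2
      rw [List.suffix_cons_iff] at hsuf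
      rcases hsuf with h | hsuf
      · exact absurd (by rw [h]; simp) hrv2
      rw [List.suffix_cons_iff] at hsuf
      rcases hsuf with h | hsuf
      · exact absurd (by rw [h]; simp) hrv2
      rw [List.suffix_cons_iff] at hsuf
      rcases hsuf with h | hsuf
      · exact absurd (by rw [h]; simp) hrv2
      rw [List.suffix_cons_iff] at hsuf
      rcases hsuf with h | hsuf
      · exact absurd (by rw [h]; simp) hrv2
      simpa using hsuf
    rw [hv2nil, List.append_nil] at hveq
    rw [← hveq] at h1
    -- p and q are in {1,2,3}
    have hple : ∀ y : ℕ, count y [p,q,r,p,r,q,r] = 2 → 1 ≤ y ∧ y ≤ 3 := by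
      intro y hyc
      by_contra hy4
      have hy0 : y ≠ 1 ∧ y ≠ 2 ∧ y ≠ 3 := by omega
      have hcle := h1.count_le y
      rw [hyc] at hcle
      simp only [count_append] at hcle
      rw [count_Ql hy0.1 hy0.2.1 (by omega)] at hcle
      have e1 : count y [1,2,3] = 0 := by
        simp [List.count_cons]
        omega
      have e2 : count y [1,2] = 0 := by
        simp [List.count_cons]
        omega
      rw [e1, e2] at hcle
      split_ifs at hcle <;> omega
    have hpc : count p [p,q,r,p,r,q,r] = 2 := by
      simp [List.count_cons, hpq, hpr, Ne.symm hpq, Ne.symm hpr]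
    have hqc : count q [p,q,r,p,r,q,r] = 2 := by
      simp [List.count_cons, Ne.symm hpq, hqr, hpq, Ne.symm hqr]
    have hp3 := hple p hpc
    have hq3 := hple q hqc
    -- second decomposition isolating the two 3's
    have hdec2 : Ql (n-2) n ++ ([1,2,3] ++ [1,2]) =
        (Ql (n-3) n ++ [1,2]) ++ ([3] ++ ([1,2,3] ++ [1,2])) := by
      rw [PdecL (v := 3) (by omega) (by omega)]
      simp [Ql_zero]
    rw [hdec2] at h1
    obtain ⟨w₁, w₂', hweq, hw1, hw2'⟩ := List.sublist_append_iff.mp h1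
    obtain ⟨w₂, w₃', hweq2, hw2, hw3'⟩ := List.sublist_append_iff.mp hw2'
    obtain ⟨w₃, w₄, hweq3, hw3, hw4⟩ := List.sublist_append_iff.mp hw3'
    have hw1c : (3:ℕ) ∉ w₁ := by
      intro hmem
      have hc := hw1.count_le 3
      rw [count_append, count_Ql (by omega) (by omega) (by omega)] at hc
      have e2 : count 3 [1,2] = 0 := by simp
      rw [e2] at hc
      have := List.count_pos_iff.mpr hmem
      split_ifs at hc <;> omega
    have hlen3 : w₃.length ≤ 3 := by simpa using hw3.length_le
    have hlen4 : w₄.length ≤ 2 := by simpa using hw4.length_le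
    have hlen2 : w₂.length ≤ 1 := by simpa using hw2.length_le
    have hvw : w₁ ++ (w₂ ++ (w₃ ++ w₄)) = [p,q,r,p,r,q,r] := by
      rw [← hweq3, ← hweq2, ← hweq]
    -- case p = 3 or q = 3
    have hp3q3 : p = 3 ∨ q = 3 := by omega
    rcases hp3q3 with hp' | hq'
    · -- p = 3 : w₁ = [], total length too small
      rw [hp'] at hvw
      have hw1nil : w₁ = [] := unif_head hvw hw1c
      rw [hw1nil, List.nil_append] at hvw
      have hlen7 := congrArg List.length hvw
      simp at hlen7
      omega
    · -- q = 3
      rw [hq'] at hvw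
      rcases unif3 hvw hw1c with hw1nil | ⟨hw1p, hrest⟩
      · rw [hw1nil, List.nil_append] at hvw
        rcases sub_single hw2 with h | h
        · rw [h, List.nil_append] at hvw
          have hlen7 := congrArg List.length hvw
          simp at hlen7
          omega
        · rw [h] at hvw
          simp only [List.cons_append, List.nil_append, List.cons.injEq] at hvw
          obtain ⟨h3p, -⟩ := hvw
          omega
      · -- w₁ = [p]
        rcases sub_single hw2 with h | h
        · rw [hw1p, h, List.nil_append] at hvw
          have hlen7 := congrArg List.length hvw
          simp at hlen7
          omega
        · rw [hw1p, h] at hvw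
          have htail : w₃ ++ w₄ = [r, p, r] ++ [3, r] := by
            simpa using hvw
          have hlen5 := congrArg List.length htail
          simp at hlen5
          obtain ⟨he3, he4⟩ := List.append_inj' htail (by simp; omega)
          have hw3eq : w₃ = [1,2,3] := hw3.eq_of_length (by simp [he3])
          rw [he3] at hw3eq
          simp at hw3eq
          omega
    }
  · -- 6 ≤ r ≤ n
    have hdec : abcacbcSeq n =
        (Ql (n-r) n ++ [1,2]) ++ ([r] ++ ((Ql (r-3) (r-1) ++ ([1,2,3] ++ ([1,2] ++ Rl (n-r) n)))
          ++ ([r] ++ (Rl (r-4) (r-1) ++ Tl (n-5) 6)))) := by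
      rw [seq_eq, PdecL (v := r) (by omega) (by omega), RdecL (v := r) (by omega) (by omega),
        Rl_cons (by omega)]
      simp
    rw [hdec] at hsub
    obtain ⟨v₁, v₂', e1, h1, h2'⟩ := List.sublist_append_iff.mp hsub
    obtain ⟨v₂, v₃', e2, h2, h3'⟩ := List.sublist_append_iff.mp h2'
    obtain ⟨v₃, v₄', e3, h3, h4'⟩ := List.sublist_append_iff.mp h3'
    obtain ⟨v₄, v₅, e4, h4, h5⟩ := List.sublist_append_iff.mp h4'
    have hrG : count r (Ql (n-r) n ++ [1,2]) = 0 := by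
      rw [count_append, count_Ql (by omega) (by omega) (by omega)]
      have : count r [1,2] = 0 := by simp [List.count_cons]; omega
      rw [this]
      split_ifs <;> omega
    have hrH : count r (Ql (r-3) (r-1) ++ ([1,2,3] ++ ([1,2] ++ Rl (n-r) n))) = 0 := by
      simp only [count_append]
      rw [count_Ql (by omega) (by omega) (by omega), count_Rl (by omega)]
      have e5 : count r [1,2,3] = 0 := by simp [List.count_cons]; omega
      have e6 : count r [1,2] = 0 := by simp [List.count_cons]; omega
      rw [e5, e6]
      split_ifs <;> omega
    have hrY : count r (Rl (r-4) (r-1) ++ Tl (n-5) 6) ≤ 1 := by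
      rw [count_append, count_Rl (by omega), count_Tl]
      split_ifs <;> omega
    have hc1 : count r v₁ = 0 := by
      have := h1.count_le r; omega
    have hc3 : count r v₃ = 0 := by
      have := h3.count_le r; omega
    have hc5 : count r v₅ ≤ 1 := by
      have := h5.count_le r; omega
    have hc2 : count r v₂ ≤ 1 := by
      have := h2.count_le r; simp at this; omega
    have hc4 : count r v₄ ≤ 1 := by
      have := h4.count_le r; simp at this; omega
    rw [e2, e3, e4] at e1
    have hcsum : count r v₁ + count r v₂ + count r v₃ + count r v₄ + count r v₅ = 3 := by
      have h2c := congrArg (count r) e1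
      simp only [count_append] at h2c
      omega
    have hv2r : v₂ = [r] := by
      rcases sub_single h2 with h | h
      · rw [h] at hcsum; simp at hcsum; omega
      · exact h
    have hv4r : v₄ = [r] := by
      rcases sub_single h4 with h | h
      · rw [h] at hcsum; simp at hcsum; omega
      · exact h
    have hveq : v₁ ++ r :: (v₃ ++ r :: v₅) = [p,q,r,p,r,q,r] := by
      rw [hv2r, hv4r] at e1
      simpa using e1.symm
    have hrnotin1 : r ∉ v₁ := by
      intro hmem; have := List.count_pos_iff.mpr hmem; omega
    obtain ⟨hv1, hrest⟩ := unif1 hpr hqr hveq hrnotin1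
    have hrnotin3 : r ∉ v₃ := by
      intro hmem; have := List.count_pos_iff.mpr hmem; omega
    obtain ⟨hv3, hv5⟩ := unif2 hpr hrest hrnotin3
    -- v₅ = [q, r] <+ Rl (r-4) (r-1) ++ Tl (n-5) 6
    rw [hv5] at h5
    obtain ⟨w₁, w₂, hw, hw1, hw2⟩ := List.sublist_append_iff.mp h5
    have hrw1 : r ∉ w₁ := by
      intro hmem
      have hcw := hw1.count_le r
      rw [count_Rl (by omega)] at hcw
      have := List.count_pos_iff.mpr hmem
      split_ifs at hcw <;> omega
    have hq4 : 4 ≤ q ∧ q < r := by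
      rcases unif3 hw.symm hrw1 with hnil | ⟨hwq, hwr⟩
      · rw [hnil, List.nil_append] at hw
        rw [← hw] at hw2
        have hlt := (pairwise_Tl (n-5) 6).sublist hw2
        simp at hlt
        have hqm : q ∈ Tl (n-5) 6 := hw2.subset (by simp)
        have := mem_Tl' hqm
        omega
      · have hqm : q ∈ Rl (r-4) (r-1) := by
          rw [hwq] at hw1
          exact hw1.subset (by simp)
        have := mem_Rl' hqm (by omega)
        omega
    -- but q ∈ G forces q ∈ {1,2} ∪ (r, n]
    have hqG : q ∈ Ql (n-r) n ++ [1,2] := by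
      rw [hv1] at h1
      exact h1.subset (by simp)
    rcases List.mem_append.mp hqG with hq' | hq'
    · rcases mem_Ql' hq' (by omega) with h | h | h <;> omega
    · simp at hq'; omega
-- atomic sublist helpers
lemma sub_app_left {u A : List ℕ} (B : List ℕ) (h : u <+ A) : u <+ A ++ B :=
  h.trans (List.sublist_append_left A B)
lemma sub_app_right {u B : List ℕ} (A : List ℕ) (h : u <+ B) : u <+ A ++ B :=
  h.trans (List.sublist_append_right A B)
lemma sub_1v {v : ℕ} : [1, v] <+ [1, 2, v] :=
  List.Sublist.cons₂ 1 (List.Sublist.cons 2 (List.Sublist.refl [v]))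
lemma sub_2v {v : ℕ} : [2, v] <+ [1, 2, v] :=
  List.Sublist.cons 1 (List.Sublist.refl [2, v])
lemma sub_12v {v : ℕ} : [1, 2] <+ [1, 2, v] :=
  List.Sublist.cons₂ 1 (List.Sublist.cons₂ 2 (List.nil_sublist [v]))
lemma sub_23 : [2, 3] <+ [1, 2, 3] :=
  List.Sublist.cons 1 (List.Sublist.refl [2, 3])
lemma sub_sing {x : ℕ} {l : List ℕ} (h : x ∈ l) : [x] <+ l :=
  List.singleton_sublist.mpr h

lemma Ql_three (n : ℕ) : Ql 3 n = [1,2,n] ++ ([1,2,n-1] ++ [1,2,n-2]) := by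
  simp [Ql, show List.range 3 = [0,1,2] from rfl]

lemma mem_Ql_one {m n : ℕ} (h : 0 < m) : 1 ∈ Ql m n := by
  simp only [Ql, mem_flatMap, mem_range]
  exact ⟨0, h, by simp⟩

-- occurrences of 1 and 2 at 3t and 3t+1
lemma one_at {n t : ℕ} (hn : 6 ≤ n) (ht : t ≤ n-1) :
    ∃ A B : List ℕ, abcacbcSeq n = A ++ 1 :: B ∧ A.length = 3*t := by
  rcases le_or_gt t (n-3) with h | h
  · refine ⟨Ql t n, 2 :: (n-t) :: (Ql (n-3-t) (n-t-1) ++ ([1,2,3] ++ ([1,2] ++ (Rl (n-3) n ++ Tl (n-5) 6)))), ?_, by simp [length_Ql]⟩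
    rw [seq_eq, show n-2 = t + (n-2-t) by omega, Ql_add,
      Ql_cons3 (m := n-2-t) (by omega), show n-2-t-1 = n-3-t by omega]
    simp
  · rcases le_or_gt t (n-2) with h2 | h2
    · have ht2 : t = n-2 := by omega
      refine ⟨Ql (n-2) n, 2 :: (3 :: ([1,2] ++ (Rl (n-3) n ++ Tl (n-5) 6))), ?_, by simp [length_Ql]; try omega⟩
      rw [seq_eq]
      simp
    · have ht2 : t = n-1 := by omega
      refine ⟨Ql (n-2) n ++ [1,2,3], 2 :: (Rl (n-3) n ++ Tl (n-5) 6), ?_, by simp [length_Ql]; try omega⟩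
      rw [seq_eq]
      simp

lemma two_at {n t : ℕ} (hn : 6 ≤ n) (ht : t ≤ n-1) :
    ∃ A B : List ℕ, abcacbcSeq n = A ++ 2 :: B ∧ A.length = 3*t+1 := by
  rcases le_or_gt t (n-3) with h | h
  · refine ⟨Ql t n ++ [1], (n-t) :: (Ql (n-3-t) (n-t-1) ++ ([1,2,3] ++ ([1,2] ++ (Rl (n-3) n ++ Tl (n-5) 6)))), ?_, by simp [length_Ql]; try omega⟩
    rw [seq_eq, show n-2 = t + (n-2-t) by omega, Ql_add,
      Ql_cons3 (m := n-2-t) (by omega), show n-2-t-1 = n-3-t by omega]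
    simp
  · rcases le_or_gt t (n-2) with h2 | h2
    · have ht2 : t = n-2 := by omega
      refine ⟨Ql (n-2) n ++ [1], 3 :: ([1,2] ++ (Rl (n-3) n ++ Tl (n-5) 6)), ?_, by simp [length_Ql]; try omega⟩
      rw [seq_eq]
      simp
    · have ht2 : t = n-1 := by omega
      refine ⟨Ql (n-2) n ++ ([1,2,3] ++ [1]), Rl (n-3) n ++ Tl (n-5) 6, ?_, by simp [length_Ql]; try omega⟩
      rw [seq_eq]
      simp

section Insertion
variable {α : Type*} [DecidableEq α] {a b c : α} (hab : a ≠ b) (hac : a ≠ c) (hbc : b ≠ c)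
variable {n : ℕ} (hn : 6 ≤ n)

include hab hac hbc hn in
lemma insert_small {x i : ℕ} (hx1 : 1 ≤ x) (hx2 : x ≤ 2) (hi : i ≤ (abcacbcSeq n).length) :
    ¬ Sparse 3 ((abcacbcSeq n).insertIdx i x) ∨
      ContainsCopy ((abcacbcSeq n).insertIdx i x) [a,b,c,a,c,b,c] := by
  have hlen : (abcacbcSeq n).length = 5*n-9 := len_seq hn
  have hx : x = 1 ∨ x = 2 := by omega
  rcases le_or_gt i (3*n-1) with hiP | hiD
  · -- not sparse
    left
    rcases hx with rfl | rfl
    · obtain ⟨A, B, hd, hA⟩ := one_at hn (t := min ((i+1)/3) (n-1)) (by omega)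
      exact not_sparse_insert hd (by omega) (by omega) hi
    · obtain ⟨A, B, hd, hA⟩ := two_at hn (t := min (i/3) (n-1)) (by omega)
      exact not_sparse_insert hd (by omega) (by omega) hi
  · -- copy using the first three blocks and the D-occurrence of n
    right
    have e := Ql_add 3 (n-5) n
    rw [show (3:ℕ)+(n-5) = n-2 by omega] at e
    have hcut : abcacbcSeq n =
        ([1,2,n] ++ ([1,2,n-1] ++ ([1,2,n-2] ++ (Ql (n-5) (n-3) ++
          ([1,2,3] ++ ([1,2] ++ [n]))))))
        ++ (Rl (n-4) (n-1) ++ Tl (n-5) 6) := by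
      rw [seq_eq, e, Ql_three, Rl_cons (v := n) (by omega)]
      simp
    have htake : (abcacbcSeq n).take (3*n) =
        [1,2,n] ++ ([1,2,n-1] ++ ([1,2,n-2] ++ (Ql (n-5) (n-3) ++
          ([1,2,3] ++ ([1,2] ++ [n]))))) := by
      rw [hcut]
      exact List.take_left' (by simp [length_Ql]; try omega)
    rcases hx with rfl | rfl
    · refine copy_insert hab hac hbc hi (p := 2) (q := n) (r := 1)
        (u₁ := [2,n,1,2,1,n]) (u₂ := [])
        (by omega) (by omega) (by omega) rfl ?_ (List.nil_sublist _)
      apply sub_take_mono (d := 3*n) _ (by omega)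
      rw [htake]
      exact sub_2v.append ((sub_12v).append ((sub_sing (by simp)).append
        (sub_app_right _ (sub_app_right _ (sub_app_right _ (List.Sublist.refl [n]))))))
    · refine copy_insert hab hac hbc hi (p := 1) (q := n) (r := 2)
        (u₁ := [1,n,2,1,2,n]) (u₂ := [])
        (by omega) (by omega) (by omega) rfl ?_ (List.nil_sublist _)
      apply sub_take_mono (d := 3*n) _ (by omega)
      rw [htake]
      exact sub_1v.append ((sub_sing (by simp)).append ((sub_12v).append
        (sub_app_right _ (sub_app_right _ (sub_app_right _ (List.Sublist.refl [n]))))))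

end Insertion
section Insertion2
variable {α : Type*} [DecidableEq α] {a b c : α} (hab : a ≠ b) (hac : a ≠ c) (hbc : b ≠ c)
variable {n : ℕ} (hn : 6 ≤ n)

include hab hac hbc hn in
lemma insert_mid {x i : ℕ} (hx3 : 3 ≤ x) (hxn : x ≤ n) (hi : i ≤ (abcacbcSeq n).length) :
    ¬ Sparse 3 ((abcacbcSeq n).insertIdx i x) ∨
      ContainsCopy ((abcacbcSeq n).insertIdx i x) [a,b,c,a,c,b,c] := by
  have hlen : (abcacbcSeq n).length = 5*n-9 := len_seq hn
  rcases le_or_gt i (3*(n-x)) with hi1 | hi2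
  · -- before x's own block : copy (x,1,2) with inserted x first
    right
    have hcut : abcacbcSeq n = Ql (n-x) n ++ ([1,2,x] ++ (Ql (x-3) (x-1) ++
        ([1,2,3] ++ ([1,2] ++ (Rl (n-3) n ++ Tl (n-5) 6))))) := by
      rw [seq_eq, PdecL (v := x) (by omega) (by omega)]
      simp
    have hdrop : (abcacbcSeq n).drop (3*(n-x)) = [1,2,x] ++ (Ql (x-3) (x-1) ++
        ([1,2,3] ++ ([1,2] ++ (Rl (n-3) n ++ Tl (n-5) 6)))) := by
      rw [hcut]; exact List.drop_left' (by simp [length_Ql])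
    refine copy_insert hab hac hbc hi (p := x) (q := 1) (r := 2)
      (u₁ := []) (u₂ := [1,2,x,2,1,2]) (by omega) (by omega) (by omega) rfl
      (List.nil_sublist _) ?_
    apply sub_drop_mono (e := 3*(n-x)) _ (by omega)
    rw [hdrop]
    exact (List.Sublist.refl [1,2,x]).append (sub_app_right _
      ((sub_sing (by simp)).append (sub_app_left _ (List.Sublist.refl [1,2]))))
  rcases le_or_gt i (3*(n-x)+4) with hi3 | hi4
  · -- near x's own block : not sparse
    left
    have hcut : abcacbcSeq n = (Ql (n-x) n ++ [1,2]) ++ x :: (Ql (x-3) (x-1) ++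
        ([1,2,3] ++ ([1,2] ++ (Rl (n-3) n ++ Tl (n-5) 6)))) := by
      rw [seq_eq, PdecL (v := x) (by omega) (by omega)]
      simp
    exact not_sparse_insert hcut (by simp [length_Ql]; omega) (by simp [length_Ql]; omega) hi
  by_cases hx3' : x = 3
  · subst hx3'
    rcases le_or_gt i (3*n-2) with hi5 | hi6
    · -- near the second 3 : not sparse
      left
      have hcut : abcacbcSeq n = (Ql (n-2) n ++ [1,2]) ++ 3 ::
          ([1,2] ++ (Rl (n-3) n ++ Tl (n-5) 6)) := by
        rw [seq_eq]; simp
      exact not_sparse_insert hcut (by simp [length_Ql]; omega) (by simp [length_Ql]; omega) hi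
    · -- copy (2,1,3) entirely before position i
      right
      have e := Ql_add 2 (n-4) n
      rw [show (2:ℕ)+(n-4) = n-2 by omega] at e
      have e2 := Ql_add (n-5) 1 (n-2)
      rw [show n-5+1 = n-4 by omega, show (n-2)-(n-5) = 3 by omega, Ql_one] at e2
      have e3 : Ql 2 n = [1,2,n] ++ [1,2,n-1] := by
        simp [Ql, show List.range 2 = [0,1] from rfl]
      have hcut : abcacbcSeq n = ([1,2,n] ++ ([1,2,n-1] ++ (Ql (n-5) (n-2) ++
          ([1,2,3] ++ ([1,2,3] ++ [1]))))) ++ (2 :: (Rl (n-3) n ++ Tl (n-5) 6)) := by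
        rw [seq_eq, e, e2, e3]; simp
      have htake : (abcacbcSeq n).take (3*n-2) = [1,2,n] ++ ([1,2,n-1] ++ (Ql (n-5) (n-2) ++
          ([1,2,3] ++ ([1,2,3] ++ [1])))) := by
        rw [hcut]; exact List.take_left' (by simp [length_Ql]; omega)
      refine copy_insert hab hac hbc hi (p := 2) (q := 1) (r := 3)
        (u₁ := [2,1,3,2,3,1]) (u₂ := []) (by omega) (by omega) (by omega) rfl ?_
        (List.nil_sublist _)
      apply sub_take_mono (d := 3*n-2) _ (by omega)
      rw [htake]
      exact (sub_sing (by simp)).append ((sub_sing (by simp)).append (sub_app_right _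
        ((sub_sing (by simp)).append (sub_23.append (List.Sublist.refl [1])))))
  · -- 4 ≤ x
    have hx4 : 4 ≤ x := by omega
    rcases le_or_gt i (3*n-5) with hi5 | hi6
    · -- inside P after x's block : copy [x,1,2] ++ x ++ [2,1,2]
      right
      have e2 : Ql (x-3) (x-1) = 1 :: 2 :: (x-1) :: Ql (x-4) (x-2) := by
        have h := Ql_cons3 (m := x-3) (n := x-1) (by omega)
        rwa [show x-3-1 = x-4 by omega, show x-1-1 = x-2 by omega] at h
      have hcut : abcacbcSeq n = (Ql (n-x) n ++ ([1,2] ++ ([x] ++ [1,2]))) ++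
          ((x-1) :: (Ql (x-4) (x-2) ++ ([1,2,3] ++ ([1,2] ++ (Rl (n-3) n ++ Tl (n-5) 6))))) := by
        rw [seq_eq, PdecL (v := x) (by omega) (by omega), e2]
        simp
      have htake : (abcacbcSeq n).take (3*(n-x)+5) = Ql (n-x) n ++ ([1,2] ++ ([x] ++ [1,2])) := by
        rw [hcut]; exact List.take_left' (by simp [length_Ql]; try omega)
      have hcut2 : abcacbcSeq n = (Ql (n-2) n ++ [1]) ++
          ([2,3] ++ ([1,2] ++ (Rl (n-3) n ++ Tl (n-5) 6))) := by
        rw [seq_eq]; simp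
      have hdrop : (abcacbcSeq n).drop (3*n-5) =
          [2,3] ++ ([1,2] ++ (Rl (n-3) n ++ Tl (n-5) 6)) := by
        rw [hcut2]; exact List.drop_left' (by simp [length_Ql]; omega)
      refine copy_insert hab hac hbc hi (p := x) (q := 1) (r := 2)
        (u₁ := [x,1,2]) (u₂ := [2,1,2]) (by omega) (by omega) (by omega) rfl ?_ ?_
      · apply sub_take_mono (d := 3*(n-x)+5) _ (by omega)
        rw [htake]
        exact (List.nil_sublist _).append ((List.nil_sublist _).append
          ((List.Sublist.refl [x]).append (List.Sublist.refl [1,2])))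
      · apply sub_drop_mono (e := 3*n-5) _ (by omega)
        rw [hdrop]
        exact (sub_sing (by simp)).append (sub_app_left _ (List.Sublist.refl [1,2]))
    rcases le_or_gt i (3*n-2) with hi7 | hi8
    · -- M-tail zone
      right
      by_cases hxn' : x = n
      · rw [hxn']
        have e : Ql (n-2) n = 1 :: 2 :: n :: Ql (n-3) (n-1) := by
          have h := Ql_cons3 (m := n-2) (n := n) (by omega)
          rwa [show n-2-1 = n-3 by omega] at h
        have hcutA : abcacbcSeq n = ([1,2,n] ++ Ql (n-3) (n-1)) ++
            ([1,2,3] ++ ([1,2] ++ (Rl (n-3) n ++ Tl (n-5) 6))) := by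
          rw [seq_eq, e]; simp
        have htake : (abcacbcSeq n).take (3*n-6) = [1,2,n] ++ Ql (n-3) (n-1) := by
          rw [hcutA]; exact List.take_left' (by simp [length_Ql]; omega)
        have hcutB : abcacbcSeq n = (Ql (n-2) n ++ ([1,2,3] ++ [1])) ++
            ([2] ++ (Rl (n-3) n ++ Tl (n-5) 6)) := by
          rw [seq_eq]; simp
        have hdrop : (abcacbcSeq n).drop (3*n-2) = [2] ++ (Rl (n-3) n ++ Tl (n-5) 6) := by
          rw [hcutB]; exact List.drop_left' (by simp [length_Ql]; omega)
        refine copy_insert hab hac hbc hi (p := 1) (q := 2) (r := n)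
          (u₁ := [1,2,n,1]) (u₂ := [2,n]) (by omega) (by omega) (by omega) rfl ?_ ?_
        · apply sub_take_mono (d := 3*n-6) _ (by omega)
          rw [htake]
          exact (List.Sublist.refl [1,2,n]).append (sub_sing (mem_Ql_one (by omega)))
        · apply sub_drop_mono (e := 3*n-2) _ (by omega)
          rw [hdrop]
          exact (List.Sublist.refl [2]).append (sub_app_left _
            (sub_sing (mem_Rl (by omega) (by omega) (by omega))))
      · -- 4 ≤ x ≤ n-1 : copy (1,n,x)
        have eP := Pdec2 (a := n) (b := x) (m := n) (by omega) (by omega) (by omega)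
        rw [show n-n = 0 by omega, Ql_zero, show n-1-x = n-1-x from rfl] at eP
        have hcutA : abcacbcSeq n = ([1,2,n] ++ (Ql (n-1-x) (n-1) ++ ([1,2,x] ++ Ql (x-3) (x-1))))
            ++ ([1,2,3] ++ ([1,2] ++ (Rl (n-3) n ++ Tl (n-5) 6))) := by
          rw [seq_eq, eP]; try simp
        have htake : (abcacbcSeq n).take (3*n-6) =
            [1,2,n] ++ (Ql (n-1-x) (n-1) ++ ([1,2,x] ++ Ql (x-3) (x-1))) := by
          rw [hcutA]; exact List.take_left' (by simp [length_Ql]; omega)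
        have hcutB : abcacbcSeq n = (Ql (n-2) n ++ ([1,2,3] ++ [1,2])) ++
            (n :: (Rl (n-4) (n-1) ++ Tl (n-5) 6)) := by
          rw [seq_eq, Rl_cons (v := n) (by omega)]; simp
        have hdrop : (abcacbcSeq n).drop (3*n-1) = n :: (Rl (n-4) (n-1) ++ Tl (n-5) 6) := by
          rw [hcutB]; exact List.drop_left' (by simp [length_Ql]; omega)
        refine copy_insert hab hac hbc hi (p := 1) (q := n) (r := x)
          (u₁ := [1,n,x,1]) (u₂ := [n,x]) (by omega) (by omega) (by omega) rfl ?_ ?_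
        · apply sub_take_mono (d := 3*n-6) _ (by omega)
          rw [htake]
          exact sub_1v.append ((List.nil_sublist _).append
            ((sub_sing (by simp)).append (sub_sing (mem_Ql_one (by omega)))))
        · apply sub_drop_mono (e := 3*n-1) _ (by omega)
          rw [hdrop]
          exact List.Sublist.cons₂ n (sub_app_left _
            (sub_sing (mem_Rl (by omega) (by omega) (by omega))))
    rcases le_or_gt i (4*n-5) with hiD | hiI
    · -- D zone, inserting before value v
      have hv4 : 4 ≤ 4*n-1-i ∧ 4*n-1-i ≤ n := by omega
      set v := 4*n-1-i with hv
      rcases lt_or_ge x v with hxv | hxv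
      · -- copy (1,v,x)
        right
        have eP := Pdec2 (a := v) (b := x) (m := n) (by omega) (by omega) (by omega)
        have hcutA : abcacbcSeq n = (Ql (n-v) n ++ ([1,2,v] ++ (Ql (v-1-x) (v-1) ++
            ([1,2,x] ++ Ql (x-3) (x-1))))) ++
            ([1,2,3] ++ ([1,2] ++ (Rl (n-3) n ++ Tl (n-5) 6))) := by
          rw [seq_eq, eP]; try simp
        have htake : (abcacbcSeq n).take (3*n-6) = Ql (n-v) n ++ ([1,2,v] ++ (Ql (v-1-x) (v-1) ++
            ([1,2,x] ++ Ql (x-3) (x-1)))) := by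
          rw [hcutA]; exact List.take_left' (by simp [length_Ql]; omega)
        have hcutB : abcacbcSeq n = (Ql (n-2) n ++ ([1,2,3] ++ ([1,2] ++ Rl (n-v) n))) ++
            (v :: (Rl (v-4) (v-1) ++ Tl (n-5) 6)) := by
          rw [seq_eq, RdecL (v := v) (by omega) (by omega), Rl_cons (by omega)]; simp
        have hdrop : (abcacbcSeq n).drop i = v :: (Rl (v-4) (v-1) ++ Tl (n-5) 6) := by
          rw [hcutB]; exact List.drop_left' (by simp [length_Ql, length_Rl]; omega)
        refine copy_insert hab hac hbc hi (p := 1) (q := v) (r := x)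
          (u₁ := [1,v,x,1]) (u₂ := [v,x]) (by omega) (by omega) (by omega) rfl ?_ ?_
        · apply sub_take_mono (d := 3*n-6) _ (by omega)
          rw [htake]
          exact (List.nil_sublist _).append (sub_1v.append ((List.nil_sublist _).append
            ((sub_sing (by simp)).append (sub_sing (mem_Ql_one (by omega))))))
        · rw [hdrop]
          exact List.Sublist.cons₂ v (sub_app_left _
            (sub_sing (mem_Rl (by omega) (by omega) (by omega))))
      rcases le_or_gt x (v+2) with hxv2 | hxv3
      · -- not sparse using the D-occurrence of x
        left
        have hcut : abcacbcSeq n = (Ql (n-2) n ++ ([1,2,3] ++ ([1,2] ++ Rl (n-x) n))) ++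
            x :: (Rl (x-4) (x-1) ++ Tl (n-5) 6) := by
          rw [seq_eq, RdecL (v := x) (by omega) (by omega), Rl_cons (by omega)]; simp
        exact not_sparse_insert hcut (by simp [length_Ql, length_Rl]; omega)
          (by simp [length_Ql, length_Rl]; omega) hi
      · -- x ≥ v+3 : copy (x-1, 4, x)
        right
        have eP := Pdec2 (a := x-1) (b := 4) (m := n) (by omega) (by omega) (by omega)
        rw [show x-1-1-4 = x-6 by omega, show x-1-1 = x-2 by omega,
          show (4:ℕ)-3 = 1 from rfl, show (4:ℕ)-1 = 3 from rfl,
          show n-(x-1) = n-x+1 by omega] at eP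
        have eR3 : Rl (x-v) x = x :: ((x-1) :: Rl (x-v-2) (x-2)) := by
          have h1 := Rl_succ (x-v-1) x
          have h2 := Rl_succ (x-v-2) (x-1)
          rw [show 1+(x-v-1) = x-v by omega] at h1
          rw [show 1+(x-v-2) = x-v-1 by omega, show x-1-1 = x-2 by omega] at h2
          rw [h1, h2]
        have eRv := Rl_add (n-x) (x-v) n
        rw [show n-x+(x-v) = n-v by omega, show n-(n-x) = x by omega, eR3] at eRv
        have eR : Rl (n-3) n = (Rl (n-x) n ++ (x :: ((x-1) :: Rl (x-v-2) (x-2)))) ++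
            Rl (v-3) v := by
          rw [RdecL (v := v) (by omega) (by omega), eRv]
        have hcut : abcacbcSeq n = (Ql (n-x+1) n ++ ([1,2,x-1] ++ (Ql (x-6) (x-2) ++
            ([1,2,4] ++ (Ql 1 3 ++ ([1,2,3] ++ ([1,2] ++ (Rl (n-x) n ++
              (x :: ((x-1) :: Rl (x-v-2) (x-2))))))))))) ++
            (Rl (v-3) v ++ Tl (n-5) 6) := by
          rw [seq_eq, eP, eR]; simp
        have htake : (abcacbcSeq n).take i = Ql (n-x+1) n ++ ([1,2,x-1] ++ (Ql (x-6) (x-2) ++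
            ([1,2,4] ++ (Ql 1 3 ++ ([1,2,3] ++ ([1,2] ++ (Rl (n-x) n ++
              (x :: ((x-1) :: Rl (x-v-2) (x-2)))))))))) := by
          rw [hcut]; exact List.take_left' (by simp [length_Ql, length_Rl]; omega)
        have hdrop : (abcacbcSeq n).drop i = Rl (v-3) v ++ Tl (n-5) 6 := by
          rw [hcut]; exact List.drop_left' (by simp [length_Ql, length_Rl]; omega)
        refine copy_insert hab hac hbc hi (p := x-1) (q := 4) (r := x)
          (u₁ := [x-1,4,x,x-1]) (u₂ := [4,x]) (by omega) (by omega) (by omega) rfl ?_ ?_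
        · rw [htake]
          exact (List.nil_sublist _).append ((sub_sing (by simp)).append
            ((List.nil_sublist _).append ((sub_sing (by simp)).append
              ((List.nil_sublist _).append ((List.nil_sublist _).append
                ((List.nil_sublist _).append ((List.nil_sublist _).append
                  (List.Sublist.cons₂ x (List.Sublist.cons₂ (x-1) (List.nil_sublist _))))))))))
        · rw [hdrop]
          exact (sub_sing (mem_Rl (by omega) (by omega) (by omega))).append
            (sub_sing (mem_Tl (by omega) (by omega)))
    · -- I zone, inserting before value w = i - (4n-10)
      have hw6 : 6 ≤ i - (4*n-10) ∧ i - (4*n-10) ≤ n+1 := by omega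
      set w := i - (4*n-10) with hw
      rcases le_or_gt x (w-2) with hxw | hxw'
      · rcases le_or_gt i (4*n-4) with hieq | hige
        · -- w = 6, x = 4 : not sparse using D-occurrence of 4 (= x)
          left
          have hcut : abcacbcSeq n = (Ql (n-2) n ++ ([1,2,3] ++ ([1,2] ++ Rl (n-x) n))) ++
              x :: (Rl (x-4) (x-1) ++ Tl (n-5) 6) := by
            rw [seq_eq, RdecL (v := x) (by omega) (by omega), Rl_cons (by omega)]; simp
          exact not_sparse_insert hcut (by simp [length_Ql, length_Rl]; omega)
            (by simp [length_Ql, length_Rl]; omega) hi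
        · -- w ≥ 7 : copy (1, w-1, x) entirely before i
          right
          have eP := Pdec2 (a := w-1) (b := x) (m := n) (by omega) (by omega) (by omega)
          rw [show w-1-1-x = w-2-x by omega, show w-1-1 = w-2 by omega] at eP
          have eR : Rl (n-3) n = Rl (n-x) n ++ (x :: Rl (x-4) (x-1)) := by
            rw [RdecL (v := x) (by omega) (by omega), Rl_cons (by omega)]
          have eT := TdecL (w := w) (n := n) (by omega) (by omega)
          have hcut : abcacbcSeq n = (Ql (n-(w-1)) n ++ ([1,2,w-1] ++ (Ql (w-2-x) (w-2) ++
              ([1,2,x] ++ (Ql (x-3) (x-1) ++ ([1,2,3] ++ ([1,2] ++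
                ((Rl (n-x) n ++ (x :: Rl (x-4) (x-1))) ++ Tl (w-6) 6)))))))) ++
              Tl (n+1-w) w := by
            rw [seq_eq, eP, eR, eT]; simp
          have htake : (abcacbcSeq n).take i = Ql (n-(w-1)) n ++ ([1,2,w-1] ++ (Ql (w-2-x) (w-2) ++
              ([1,2,x] ++ (Ql (x-3) (x-1) ++ ([1,2,3] ++ ([1,2] ++
                ((Rl (n-x) n ++ (x :: Rl (x-4) (x-1))) ++ Tl (w-6) 6))))))) := by
            rw [hcut]; exact List.take_left' (by simp [length_Ql, length_Rl, length_Tl]; omega)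
          refine copy_insert hab hac hbc hi (p := 1) (q := w-1) (r := x)
            (u₁ := [1,w-1,x,1,x,w-1]) (u₂ := []) (by omega) (by omega) (by omega) rfl ?_
            (List.nil_sublist _)
          rw [htake]
          exact (List.nil_sublist _).append (sub_1v.append ((List.nil_sublist _).append
            ((sub_sing (by simp)).append ((sub_sing (mem_Ql_one (by omega))).append
              ((List.nil_sublist _).append ((List.nil_sublist _).append
                (((List.nil_sublist _).append (List.Sublist.cons₂ x (List.nil_sublist _))).append
                  (sub_sing (mem_Tl (by omega) (by omega))))))))))
      rcases le_or_gt x (w+1) with hxw2 | hxw3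
      · -- not sparse using I-occurrence of x (or D-occurrence when x = 5)
        left
        rcases le_or_gt 6 x with hx6 | hx5
        · have eT := TdecL (w := x) (n := n) (by omega) (by omega)
          rw [Tl_cons (by omega)] at eT
          have hcut : abcacbcSeq n = (Ql (n-2) n ++ ([1,2,3] ++ ([1,2] ++ (Rl (n-3) n ++
              Tl (x-6) 6)))) ++ x :: Tl (n-x) (x+1) := by
            rw [seq_eq, eT]; simp
          exact not_sparse_insert hcut (by simp [length_Ql, length_Rl, length_Tl]; omega)
            (by simp [length_Ql, length_Rl, length_Tl]; omega) hi
        · -- x = 5, w = 6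
          have hx5' : x = 5 := by omega
          have hcut : abcacbcSeq n = (Ql (n-2) n ++ ([1,2,3] ++ ([1,2] ++ Rl (n-x) n))) ++
              x :: (Rl (x-4) (x-1) ++ Tl (n-5) 6) := by
            rw [seq_eq, RdecL (v := x) (by omega) (by omega), Rl_cons (by omega)]; simp
          exact not_sparse_insert hcut (by simp [length_Ql, length_Rl]; omega)
            (by simp [length_Ql, length_Rl]; omega) hi
      · -- x ≥ w+2 : copy (x-1, w, x)
        right
        have eP := Pdec2 (a := x-1) (b := w) (m := n) (by omega) (by omega) (by omega)
        rw [show x-1-1-w = x-2-w by omega, show x-1-1 = x-2 by omega,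
          show n-(x-1) = n-x+1 by omega] at eP
        have eR3 : Rl (x-3) x = x :: ((x-1) :: Rl (x-5) (x-2)) := by
          have h1 := Rl_succ (x-4) x
          have h2 := Rl_succ (x-5) (x-1)
          rw [show 1+(x-4) = x-3 by omega] at h1
          rw [show 1+(x-5) = x-4 by omega, show x-1-1 = x-2 by omega] at h2
          rw [h1, h2]
        have eR : Rl (n-3) n = Rl (n-x) n ++ (x :: ((x-1) :: Rl (x-5) (x-2))) := by
          rw [RdecL (v := x) (by omega) (by omega), eR3]
        have eT := TdecL (w := w) (n := n) (by omega) (by omega)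
        rw [Tl_cons (by omega)] at eT
        have hcut : abcacbcSeq n = (Ql (n-x+1) n ++ ([1,2,x-1] ++ (Ql (x-2-w) (x-2) ++
            ([1,2,w] ++ (Ql (w-3) (w-1) ++ ([1,2,3] ++ ([1,2] ++
              ((Rl (n-x) n ++ (x :: ((x-1) :: Rl (x-5) (x-2)))) ++ Tl (w-6) 6)))))))) ++
            (w :: Tl (n-w) (w+1)) := by
          rw [seq_eq, eP, eR, eT]; simp
        have htake : (abcacbcSeq n).take i = Ql (n-x+1) n ++ ([1,2,x-1] ++ (Ql (x-2-w) (x-2) ++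
            ([1,2,w] ++ (Ql (w-3) (w-1) ++ ([1,2,3] ++ ([1,2] ++
              ((Rl (n-x) n ++ (x :: ((x-1) :: Rl (x-5) (x-2)))) ++ Tl (w-6) 6))))))) := by
          rw [hcut]; exact List.take_left' (by simp [length_Ql, length_Rl, length_Tl]; omega)
        have hdrop : (abcacbcSeq n).drop i = w :: Tl (n-w) (w+1) := by
          rw [hcut]; exact List.drop_left' (by simp [length_Ql, length_Rl, length_Tl]; omega)
        refine copy_insert hab hac hbc hi (p := x-1) (q := w) (r := x)
          (u₁ := [x-1,w,x,x-1]) (u₂ := [w,x]) (by omega) (by omega) (by omega) rfl ?_ ?_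
        · rw [htake]
          exact (List.nil_sublist _).append ((sub_sing (by simp)).append
            ((List.nil_sublist _).append ((sub_sing (by simp)).append
              ((List.nil_sublist _).append ((List.nil_sublist _).append
                ((List.nil_sublist _).append (((List.nil_sublist _).append
                  (List.Sublist.cons₂ x (List.Sublist.cons₂ (x-1) (List.nil_sublist _)))).append
                    (List.nil_sublist _))))))))
        · rw [hdrop]
          exact List.Sublist.cons₂ w (sub_sing (mem_Tl (by omega) (by omega)))

end Insertion2

theorem stmt1 {α : Type*} [DecidableEq α] (a b c : α)
    (hab : a ≠ b) (hac : a ≠ c) (hbc : b ≠ c) (n : ℕ) (hn : 6 ≤ n) :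
    Saturated [a, b, c, a, c, b, c] (abcacbcSeq n) (Set.Icc 1 n) := by
  have hcard : ([a,b,c,a,c,b,c] : List α).toFinset.card = 3 := card_u hab hac hbc
  unfold Saturated
  rw [hcard]
  refine ⟨sparse_seq hn, avoid_seq hab hac hbc hn, mem_seq hn, ?_⟩
  intro x hx i hi
  simp only [Set.mem_Icc] at hx
  rcases le_or_gt x 2 with h | h
  · exact insert_small hab hac hbc hn hx.1 h hi
  · exact insert_mid hab hac hbc hn (by omega) hx.2 hi
end

section
/- Let a, b, c be three pairwise distinct letters, let t ≥ 2 be an integer, and let u = (abc)^t be the concatenation of t copies of abc. For every integer n ≥ 3, the sequence over the alphabet {1,…,n} given by (1,2,n)^{t−1} (1,2,n−1)^{t−1} ⋯ (1,2,3)^{t−1} 1,2 — that is, for each k = n, n−1, …, 3 in decreasing order, t−1 consecutive copies of the block 1,2,k, followed by the two letters 1,2 — is u-saturated. -/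
namespace Stmt3Aux

open List

/-- `k` copies of `l` concatenated. -/
def repL {γ : Type*} (k : ℕ) (l : List γ) : List γ := (List.range k).flatMap fun _ => l

lemma repL_succ_right {γ : Type*} (k : ℕ) (l : List γ) : repL (k+1) l = repL k l ++ l := by
  simp [repL, List.range_succ]

lemma repL_succ_left {γ : Type*} (k : ℕ) (l : List γ) : repL (k+1) l = l ++ repL k l := by
  induction k with
  | zero => rw [repL, List.range_succ]; simp [repL]
  | succ k ih =>
      calc repL (k+1+1) l = repL (k+1) l ++ l := repL_succ_right _ _
        _ = (l ++ repL k l) ++ l := by rw [ih]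
        _ = l ++ (repL k l ++ l) := List.append_assoc _ _ _
        _ = l ++ repL (k+1) l := by rw [← repL_succ_right]

lemma count_repL {γ : Type*} [DecidableEq γ] (k : ℕ) (l : List γ) (y : γ) :
    (repL k l).count y = k * l.count y := by
  induction k with
  | zero => simp [repL]
  | succ k ih => rw [repL_succ_right]; simp [ih, Nat.succ_mul]

lemma map_repL {γ δ : Type*} (φ : γ → δ) (k : ℕ) (l : List γ) :
    (repL k l).map φ = repL k (l.map φ) := by
  simp [repL, List.map_flatMap]

lemma repL_rot {γ : Type*} (k : ℕ) (x y z : γ) :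
    repL (k+1) [x,y,z] = x :: (repL k [y,z,x] ++ [y,z]) := by
  induction k with
  | zero => rw [repL, List.range_succ]; simp [repL]
  | succ k ih =>
      rw [repL_succ_right, ih, repL_succ_right]
      simp

lemma count_map_inj {γ δ : Type*} [DecidableEq γ] [DecidableEq δ] (φ : γ → δ) (x : γ) :
    ∀ (l : List γ), (∀ z ∈ l, φ z = φ x → z = x) → (l.map φ).count (φ x) = l.count x := by
  intro l
  induction l with
  | nil => simp
  | cons h tl ih =>
      intro hinj
      simp only [List.map_cons, List.count_cons]
      rw [ih (fun z hz he => hinj z (List.mem_cons_of_mem _ hz) he)]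
      by_cases hhx : h = x
      · simp [hhx]
      · have : φ h ≠ φ x := fun he => hhx (hinj h List.mem_cons_self he)
        simp [hhx, this]

lemma count_flat_zero {γ : Type*} [DecidableEq γ] (g : ℕ → List γ) (y : γ) :
    ∀ m, (∀ i, i < m → (g i).count y = 0) → ((List.range m).flatMap g).count y = 0 := by
  intro m
  induction m with
  | zero => simp
  | succ m ih =>
      intro h
      rw [List.range_succ, List.flatMap_append, List.count_append]
      have h1 := ih (fun i hi => h i (by omega))
      have h2 := h m (by omega)
      simp [h1, h2]

lemma count_flat_le {γ : Type*} [DecidableEq γ] (g : ℕ → List γ) (y : γ) (c : ℕ) :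
    ∀ m, (∀ i, i < m → (g i).count y ≤ c) →
      (∀ i j, i < m → j < m → (g i).count y ≠ 0 → (g j).count y ≠ 0 → i = j) →
      ((List.range m).flatMap g).count y ≤ c := by
  intro m
  induction m with
  | zero => simp
  | succ m ih =>
      intro hle huniq
      rw [List.range_succ, List.flatMap_append, List.count_append]
      by_cases h0 : (g m).count y = 0
      · have := ih (fun i hi => hle i (by omega))
          (fun i j hi hj => huniq i j (by omega) (by omega))
        simp only [List.flatMap_cons, List.flatMap_nil, List.append_nil]
        omega
      · have hz : ((List.range m).flatMap g).count y = 0 := by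
          apply count_flat_zero
          intro i hi
          by_contra hne
          have := huniq i m (by omega) (by omega) hne h0
          omega
        have := hle m (by omega)
        simp only [List.flatMap_cons, List.flatMap_nil, List.append_nil]
        omega

lemma insertIdx_take_drop {γ : Type*} (x : γ) :
    ∀ (i : ℕ) (l : List γ), i ≤ l.length → l.insertIdx i x = l.take i ++ x :: l.drop i
  | 0, l, _ => by simp
  | (i+1), [], h => by simp at h
  | (i+1), (y :: l), h => by
      simp only [List.insertIdx_succ_cons, List.take_succ_cons, List.drop_succ_cons,
        List.cons_append]
      rw [insertIdx_take_drop x i l (by simpa using h)]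

lemma range'_split (a N β len : ℕ) (ha : a ≤ β) (h : β + len ≤ a + N) :
    ∃ l1 l2, List.range' a N = l1 ++ (List.range' β len ++ l2) := by
  set R := a + N - (β + len) with hR
  refine ⟨List.range' a (β - a), List.range' (β + len) R, ?_⟩
  rw [show N = (β - a) + (len + R) by omega, ← List.range'_append_1,
    show a + (β - a) = β by omega, ← List.range'_append_1]

lemma sublist_map_range' (f : ℕ → ℕ) (a N β len : ℕ) (ha : a ≤ β) (h : β + len ≤ a + N) :
    (List.range' β len).map f <+ (List.range' a N).map f := by
  obtain ⟨l1, l2, hs⟩ := range'_split a N β len ha h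
  rw [hs]
  simp only [List.map_append]
  exact ((List.sublist_append_left _ _).trans (List.sublist_append_right _ _))

/-- The letter at position `p` of the saturated word. -/
def fF (n t p : ℕ) : ℕ :=
  if p % 3 = 0 then 1 else if p % 3 = 1 then 2 else n - p / (3*(t-1))

lemma fF_mod0 (n t p : ℕ) (h : p % 3 = 0) : fF n t p = 1 := by simp [fF, h]

lemma fF_mod1 (n t p : ℕ) (h : p % 3 = 1) : fF n t p = 2 := by simp [fF, h]

lemma fF_mod2 (n t p : ℕ) (h : p % 3 = 2) : fF n t p = n - p / (3*(t-1)) := by simp [fF, h]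

lemma map_range'_triple (f : ℕ → ℕ) (x y z : ℕ) :
    ∀ (k β : ℕ), (∀ j, j < k → f (β+3*j) = x ∧ f (β+3*j+1) = y ∧ f (β+3*j+2) = z) →
      List.map f (List.range' β (3*k)) = repL k [x,y,z] := by
  intro k
  induction k with
  | zero => intro β _; simp [repL]
  | succ k ih =>
      intro β h
      have hsplit : List.range' β (3*(k+1)) = List.range' β 3 ++ List.range' (β+3) (3*k) := by
        rw [List.range'_append_1, show 3 + 3*k = 3*(k+1) by ring]
      rw [hsplit, List.map_append, repL_succ_left]
      have h0 := h 0 (by omega)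
      have hfirst : List.map f (List.range' β 3) = [x, y, z] := by
        have : List.range' β 3 = [β, β+1, β+2] := by
          simp [List.range'_succ]
        rw [this]
        simp only [List.map_cons, List.map_nil]
        rw [show β + 3*0 = β by ring] at h0
        rw [h0.1, h0.2.1, h0.2.2]
      rw [hfirst]
      congr 1
      apply ih
      intro j hj
      have := h (j+1) (by omega)
      rw [show β + 3*(j+1) = β + 3 + 3*j by ring] at this
      exact this


section Struct

variable (n t : ℕ)

lemma div_block (m r : ℕ) (ht : 2 ≤ t) (hr : r < 3*(t-1)) :
    (m * (3*(t-1)) + r) / (3*(t-1)) = m := by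
  rw [show m * (3*(t-1)) + r = (3*(t-1)) * m + r by ring,
    Nat.mul_add_div (by omega), Nat.div_eq_of_lt hr]
  omega

lemma fF_block (m j : ℕ) (ht : 2 ≤ t) (hmn : m ≤ n) (hj : j < t - 1) :
    fF n t ((n-m) * (3*(t-1)) + 3*j) = 1 ∧
    fF n t ((n-m) * (3*(t-1)) + 3*j + 1) = 2 ∧
    fF n t ((n-m) * (3*(t-1)) + 3*j + 2) = m := by
  have hβ3 : ((n-m) * (3*(t-1))) % 3 = 0 := by
    have : (3:ℕ) ∣ (n-m) * (3*(t-1)) := ⟨(n-m)*(t-1), by ring⟩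
    omega
  refine ⟨fF_mod0 _ _ _ (by omega), fF_mod1 _ _ _ (by omega), ?_⟩
  rw [fF_mod2 _ _ _ (by omega), show (n-m) * (3*(t-1)) + 3*j + 2 =
    (n-m) * (3*(t-1)) + (3*j + 2) by ring, div_block t _ _ ht (by omega)]
  omega

lemma map_block (m : ℕ) (ht : 2 ≤ t) (hmn : m ≤ n) :
    List.map (fF n t) (List.range' ((n-m)*(3*(t-1))) (3*(t-1))) = repL (t-1) [1,2,m] := by
  have := map_range'_triple (fF n t) 1 2 m (t-1) ((n-m)*(3*(t-1)))
    (fun j hj => fF_block n t m j ht hmn hj)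
  rwa [show 3*(t-1) = 3*(t-1) by rfl] at this

lemma seg_eq (m : ℕ) (ht : 2 ≤ t) (hm3 : 3 ≤ m) (hmn : m ≤ n) :
    List.map (fF n t) (List.range' ((n-m)*(3*(t-1))) (3*(t-1)+2))
      = repL (t-1) [1,2,m] ++ [1,2] := by
  have hβ3 : ((n-m) * (3*(t-1))) % 3 = 0 := by
    have : (3:ℕ) ∣ (n-m) * (3*(t-1)) := ⟨(n-m)*(t-1), by ring⟩
    omega
  rw [← List.range'_append_1, List.map_append]
  rw [map_block n t m ht hmn]
  congr 1
  have h2 : List.range' ((n-m)*(3*(t-1)) + 3*(t-1)) 2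
      = [(n-m)*(3*(t-1)) + 3*(t-1), (n-m)*(3*(t-1)) + 3*(t-1) + 1] := by
    simp [List.range'_succ]
  rw [h2]
  have hd3 : ((n-m)*(3*(t-1)) + 3*(t-1)) % 3 = 0 := by omega
  simp only [List.map_cons, List.map_nil]
  rw [fF_mod0 _ _ _ (by omega), fF_mod1 _ _ _ (by omega)]

lemma flat_eq (ht : 2 ≤ t) : ∀ m : ℕ, m ≤ n →
    (List.range m).flatMap (fun i => (List.range (t-1)).flatMap (fun _ => [1,2,n-i]))
      = (List.range (m*(3*(t-1)))).map (fF n t) := by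
  intro m
  induction m with
  | zero => intro _; simp
  | succ m ih =>
      intro hmn
      rw [List.range_succ, List.flatMap_append, ih (by omega)]
      have hsplit : List.range ((m+1)*(3*(t-1)))
          = List.range (m*(3*(t-1))) ++ List.range' (m*(3*(t-1))) (3*(t-1)) := by
        rw [List.range_eq_range', List.range_eq_range',
          show (m+1)*(3*(t-1)) = m*(3*(t-1)) + 3*(t-1) by ring, ← List.range'_append_1,
          show (0:ℕ) + m*(3*(t-1)) = m*(3*(t-1)) by omega]
      rw [hsplit, List.map_append]
      congr 1
      simp only [List.flatMap_cons, List.flatMap_nil, List.append_nil]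
      have := map_block n t (n-m) ht (by omega)
      rw [show n - (n-m) = m by omega] at this
      rw [this]
      rfl

lemma s_eq (hn : 3 ≤ n) (ht : 2 ≤ t) :
    (((List.range (n - 2)).flatMap (fun i =>
        (List.range (t - 1)).flatMap (fun _ => [1, 2, n - i]))) ++ [1, 2])
      = (List.range ((n-2)*(3*(t-1)) + 2)).map (fF n t) := by
  have hK3 : ((n-2)*(3*(t-1))) % 3 = 0 := by
    have : (3:ℕ) ∣ (n-2)*(3*(t-1)) := ⟨(n-2)*(t-1), by ring⟩
    omega
  have h1 : List.range ((n-2)*(3*(t-1)) + 2)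
      = List.range ((n-2)*(3*(t-1))) ++ [(n-2)*(3*(t-1)), (n-2)*(3*(t-1)) + 1] := by
    rw [show (n-2)*(3*(t-1)) + 2 = ((n-2)*(3*(t-1)) + 1) + 1 by omega,
      List.range_succ, List.range_succ, List.append_assoc]
    rfl
  rw [flat_eq n t ht (n-2) (by omega), h1, List.map_append]
  congr 1
  simp only [List.map_cons, List.map_nil]
  rw [fF_mod0 _ _ _ (by omega), fF_mod1 _ _ _ (by omega)]

lemma count_s_le (hn : 3 ≤ n) (ht : 2 ≤ t) (y : ℕ) (hy1 : y ≠ 1) (hy2 : y ≠ 2) :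
    ((((List.range (n - 2)).flatMap (fun i =>
        (List.range (t - 1)).flatMap (fun _ => [1, 2, n - i]))) ++ [1, 2]).count y) ≤ t - 1 := by
  rw [List.count_append]
  have h2 : ([1,2] : List ℕ).count y = 0 := by
    simp [List.count_cons, hy1, hy2, Ne.symm hy1, Ne.symm hy2]
  have hgi : ∀ i : ℕ, (((List.range (t-1)).flatMap (fun _ => [(1:ℕ), 2, n - i])).count y)
      = (t-1) * (if n - i = y then 1 else 0) := by
    intro i
    rw [show ((List.range (t-1)).flatMap (fun _ => [(1:ℕ), 2, n - i])) = repL (t-1) [1,2,n-i]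
      from rfl, count_repL]
    congr 1
    rcases eq_or_ne (n-i) y with h | h
    · simp [List.count_cons, h, hy1, hy2, Ne.symm hy1, Ne.symm hy2]
    · simp [List.count_cons, h, Ne.symm h, hy1, hy2, Ne.symm hy1, Ne.symm hy2]
  have hmain := count_flat_le (fun i => (List.range (t-1)).flatMap (fun _ => [(1:ℕ), 2, n - i]))
    y (t-1) (n-2)
    (by
      intro i hi
      rw [hgi i]
      rcases eq_or_ne (n-i) y with h | h <;> simp [h])
    (by
      intro i j hi hj hni hnj
      rw [hgi i] at hni
      rw [hgi j] at hnj
      rcases eq_or_ne (n-i) y with h | h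
      · rcases eq_or_ne (n-j) y with h' | h'
        · omega
        · simp [h'] at hnj
      · simp [h] at hni)
  omega

lemma fF_lt_cases (p : ℕ) (hn : 3 ≤ n) (ht : 2 ≤ t) (hp : p < (n-2)*(3*(t-1)) + 2) :
    (p % 3 = 0 ∧ fF n t p = 1) ∨ (p % 3 = 1 ∧ fF n t p = 2) ∨
      (p % 3 = 2 ∧ 3 ≤ fF n t p ∧ fF n t p ≤ n) := by
  have hK3 : ((n-2)*(3*(t-1))) % 3 = 0 := by
    have : (3:ℕ) ∣ (n-2)*(3*(t-1)) := ⟨(n-2)*(t-1), by ring⟩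
    omega
  rcases show p % 3 = 0 ∨ p % 3 = 1 ∨ p % 3 = 2 by omega with h | h | h
  · exact Or.inl ⟨h, fF_mod0 _ _ _ h⟩
  · exact Or.inr (Or.inl ⟨h, fF_mod1 _ _ _ h⟩)
  · right; right
    have hpK : p < (n-2)*(3*(t-1)) := by omega
    have hdiv : p / (3*(t-1)) < n - 2 := (Nat.div_lt_iff_lt_mul (by omega)).2 hpK
    rw [fF_mod2 _ _ _ h]
    obtain ⟨D, hD⟩ : ∃ D, p/(3*(t-1)) = D := ⟨_, rfl⟩
    rw [hD] at hdiv ⊢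
    exact ⟨h, by omega, by omega⟩

end Struct

end Stmt3Aux

open Stmt3Aux

theorem stmt3 {α : Type*} [DecidableEq α] (a b c : α)
    (hab : a ≠ b) (hac : a ≠ c) (hbc : b ≠ c)
    (t : ℕ) (ht : 2 ≤ t) (n : ℕ) (hn : 3 ≤ n) :
    Saturated ((List.range t).flatMap (fun _ => [a, b, c]))
      (((List.range (n - 2)).flatMap (fun i =>
          (List.range (t - 1)).flatMap (fun _ => [1, 2, n - i]))) ++ [1, 2])
      (Set.Icc 1 n) := by
  have hK3 : ((n-2)*(3*(t-1))) % 3 = 0 := by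
    have : (3:ℕ) ∣ (n-2)*(3*(t-1)) := ⟨(n-2)*(t-1), by ring⟩
    omega
  have hmemu : ∀ z : α, z ∈ (List.range t).flatMap (fun _ => [a,b,c]) ↔
      (z = a ∨ z = b ∨ z = c) := by
    intro z
    constructor
    · intro h
      rcases List.mem_flatMap.1 h with ⟨w, _, hw⟩
      simpa using hw
    · intro h
      exact List.mem_flatMap.2 ⟨0, List.mem_range.2 (by omega), by simpa using h⟩
  have hcard : ((List.range t).flatMap (fun _ => [a,b,c])).toFinset.card = 3 := by
    have hset : ((List.range t).flatMap (fun _ => [a,b,c])).toFinset = {a, b, c} := by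
      ext z
      simp only [List.mem_toFinset, hmemu z, Finset.mem_insert, Finset.mem_singleton]
    rw [hset, Finset.card_insert_of_notMem (by simp [hab, hac]),
      Finset.card_insert_of_notMem (by simp [hbc]), Finset.card_singleton]
  unfold Saturated
  rw [hcard, s_eq n t hn ht]
  have hslen : (List.map (fF n t) (List.range ((n-2)*(3*(t-1)) + 2))).length
      = (n-2)*(3*(t-1)) + 2 := by simp
  refine ⟨?_, ?_, ?_, ?_⟩
  · -- Sparse
    intro i j hij hj h3
    have hjL : j < (n-2)*(3*(t-1)) + 2 := by rw [hslen] at hj; exact hj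
    have gi : (List.map (fF n t) (List.range ((n-2)*(3*(t-1)) + 2))).get ⟨i, hij.trans hj⟩
        = fF n t i := by simp
    have gj : (List.map (fF n t) (List.range ((n-2)*(3*(t-1)) + 2))).get ⟨j, hj⟩
        = fF n t j := by simp
    rw [gi, gj]
    rcases fF_lt_cases n t i hn ht (by omega) with ⟨h1,h2⟩|⟨h1,h2⟩|⟨h1,h2,h2'⟩ <;>
      rcases fF_lt_cases n t j hn ht (by omega) with ⟨g1,g2⟩|⟨g1,g2⟩|⟨g1,g2,g2'⟩ <;>
      omega
  · -- avoids u
    rintro ⟨v, hsub, φ, hinj, hv⟩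
    have hau : a ∈ (List.range t).flatMap (fun _ => [a,b,c]) := (hmemu a).2 (Or.inl rfl)
    have hbu : b ∈ (List.range t).flatMap (fun _ => [a,b,c]) := (hmemu b).2 (Or.inr (Or.inl rfl))
    have hcu : c ∈ (List.range t).flatMap (fun _ => [a,b,c]) := (hmemu c).2 (Or.inr (Or.inr rfl))
    have hcnt : ∀ z : α, z ∈ (List.range t).flatMap (fun _ => [a,b,c]) →
        v.count (φ z) = t := by
      intro z hz
      rw [hv, count_map_inj φ z _ (fun w hw he => hinj w hw z hz he)]
      rw [show ((List.range t).flatMap (fun _ => [a,b,c])) = repL t [a,b,c] from rfl, count_repL]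
      rcases (hmemu z).1 hz with rfl | rfl | rfl <;>
        simp [List.count_cons, hab, hac, hbc, Ne.symm hab, Ne.symm hac, Ne.symm hbc]
    have hsc : ∀ z : α, z ∈ (List.range t).flatMap (fun _ => [a,b,c]) →
        t ≤ (List.map (fF n t) (List.range ((n-2)*(3*(t-1)) + 2))).count (φ z) := by
      intro z hz
      have h1 := hsub.count_le (φ z)
      rw [hcnt z hz] at h1
      exact h1
    have ha' := hsc a hau
    have hb' := hsc b hbu
    have hc' := hsc c hcu
    have d1 : φ a ≠ φ b := fun he => hab (hinj a hau b hbu he)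
    have d2 : φ a ≠ φ c := fun he => hac (hinj a hau c hcu he)
    have d3 : φ b ≠ φ c := fun he => hbc (hinj b hbu c hcu he)
    have hbound : ∀ y : ℕ, y ≠ 1 → y ≠ 2 →
        (List.map (fF n t) (List.range ((n-2)*(3*(t-1)) + 2))).count y ≤ t - 1 := by
      intro y h1 h2
      have := count_s_le n t hn ht y h1 h2
      rwa [s_eq n t hn ht] at this
    rcases show (φ a ≠ 1 ∧ φ a ≠ 2) ∨ (φ b ≠ 1 ∧ φ b ≠ 2) ∨ (φ c ≠ 1 ∧ φ c ≠ 2) by omega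
      with ⟨u1,u2⟩|⟨u1,u2⟩|⟨u1,u2⟩
    · have := hbound _ u1 u2; omega
    · have := hbound _ u1 u2; omega
    · have := hbound _ u1 u2; omega
  · -- letters in alphabet
    intro z hz
    simp only [List.mem_map, List.mem_range] at hz
    obtain ⟨p, hp, rfl⟩ := hz
    simp only [Set.mem_Icc]
    rcases fF_lt_cases n t p hn ht hp with ⟨h1,h2⟩|⟨h1,h2⟩|⟨h1,h2,h2'⟩ <;> omega
  · -- saturation
    intro x hx i hi
    simp only [Set.mem_Icc] at hx
    rw [hslen] at hi
    have hlen' : ((List.map (fF n t) (List.range ((n-2)*(3*(t-1)) + 2))).insertIdx i x).length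
        = (n-2)*(3*(t-1)) + 2 + 1 := by
      rw [List.length_insertIdx_of_le_length (by rw [hslen]; exact hi), hslen]
    -- helper: non-sparsity from a nearby equal letter
    have hnotsp : ∀ p, p < (n-2)*(3*(t-1)) + 2 → i ≤ p + 2 → p ≤ i + 1 → fF n t p = x →
        ¬ Sparse 3 ((List.map (fF n t) (List.range ((n-2)*(3*(t-1)) + 2))).insertIdx i x) := by
      intro p hp hip hpi hfp hsp
      rcases Nat.lt_or_ge p i with hlt | hge
      · have hj : i < ((List.map (fF n t) (List.range ((n-2)*(3*(t-1)) + 2))).insertIdx i x).length := by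
          rw [hlen']; omega
        have e1 : ((List.map (fF n t) (List.range ((n-2)*(3*(t-1)) + 2))).insertIdx i x).get
            ⟨p, by rw [hlen']; omega⟩ = fF n t p := by
          have := List.getElem_insertIdx_of_lt (l := (List.map (fF n t) (List.range ((n-2)*(3*(t-1)) + 2)))) (x := x) (i := i) (j := p) hlt (by rw [hlen']; omega)
          simpa using this
        have e2 : ((List.map (fF n t) (List.range ((n-2)*(3*(t-1)) + 2))).insertIdx i x).get
            ⟨i, hj⟩ = x := by
          have := List.getElem_insertIdx_self (l := (List.map (fF n t) (List.range ((n-2)*(3*(t-1)) + 2)))) (x := x) (i := i) (by rw [hlen']; omega)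
          simpa using this
        exact hsp p i hlt hj (by omega) (by rw [e1, e2, hfp])
      · have hj : i + (p - i) + 1 <
            ((List.map (fF n t) (List.range ((n-2)*(3*(t-1)) + 2))).insertIdx i x).length := by
          rw [hlen']; omega
        have e2 : ((List.map (fF n t) (List.range ((n-2)*(3*(t-1)) + 2))).insertIdx i x).get
            ⟨i + (p - i) + 1, hj⟩ = fF n t p := by
          have := List.getElem_insertIdx_add_succ
            (List.map (fF n t) (List.range ((n-2)*(3*(t-1)) + 2))) x i (p - i)
            (by rw [hslen]; omega)
          rw [List.get_eq_getElem]
          rw [this]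
          simp only [List.getElem_map, List.getElem_range]
          rw [show i + (p - i) = p by omega]
        have e1 : ((List.map (fF n t) (List.range ((n-2)*(3*(t-1)) + 2))).insertIdx i x).get
            ⟨i, by rw [hlen']; omega⟩ = x := by
          have := List.getElem_insertIdx_self (l := (List.map (fF n t) (List.range ((n-2)*(3*(t-1)) + 2)))) (x := x) (i := i) (by rw [hlen']; omega)
          simpa using this
        exact hsp i (i + (p - i) + 1) (by omega) hj (by omega) (by rw [e1, e2, hfp])
    -- helper: producing a copy of u
    have hcontain : ∀ (v1 v2 v3 : ℕ), v1 ≠ v2 → v1 ≠ v3 → v2 ≠ v3 →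
        (repL t [v1, v2, v3]).Sublist
          ((List.map (fF n t) (List.range ((n-2)*(3*(t-1)) + 2))).insertIdx i x) →
        ContainsCopy ((List.map (fF n t) (List.range ((n-2)*(3*(t-1)) + 2))).insertIdx i x)
          ((List.range t).flatMap (fun _ => [a, b, c])) := by
      intro v1 v2 v3 h12 h13 h23 hsub
      refine ⟨repL t [v1, v2, v3], hsub,
        fun w => if w = a then v1 else if w = b then v2 else v3, ?_, ?_⟩
      · intro z hz w hw he
        simp only [] at he
        beta_reduce at he
        rcases (hmemu z).1 hz with rfl | rfl | rfl <;>
          rcases (hmemu w).1 hw with rfl | rfl | rfl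
        · rfl
        · rw [if_pos rfl, if_neg (Ne.symm hab), if_pos rfl] at he
          exact absurd he h12
        · rw [if_pos rfl, if_neg (Ne.symm hac), if_neg (Ne.symm hbc)] at he
          exact absurd he h13
        · rw [if_neg (Ne.symm hab), if_pos rfl, if_pos rfl] at he
          exact absurd he.symm h12
        · rfl
        · rw [if_neg (Ne.symm hab), if_pos rfl, if_neg (Ne.symm hac), if_neg (Ne.symm hbc)] at he
          exact absurd he h23
        · rw [if_neg (Ne.symm hac), if_neg (Ne.symm hbc), if_pos rfl] at he
          exact absurd he.symm h13
        · rw [if_neg (Ne.symm hac), if_neg (Ne.symm hbc), if_neg (Ne.symm hab), if_pos rfl] at he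
          exact absurd he.symm h23
        · rfl
      · rw [show ((List.range t).flatMap (fun _ => [a,b,c])) = repL t [a,b,c] from rfl,
          map_repL]
        congr 1
        simp [Ne.symm hab, Ne.symm hac, Ne.symm hbc]
    rcases Nat.lt_or_ge x 3 with hx3 | hx3
    · -- x ∈ {1, 2} : sparsity always violated
      left
      rcases show x = 1 ∨ x = 2 by omega with rfl | rfl
      · exact hnotsp (3*(i/3)) (by omega) (by omega) (by omega) (fF_mod0 n t _ (by omega))
      · exact hnotsp (3*(i/3)+1) (by omega) (by omega) (by omega) (fF_mod1 n t _ (by omega))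
    · -- x = m ≥ 3
      have hβ3 : ((n-x)*(3*(t-1))) % 3 = 0 := by
        have : (3:ℕ) ∣ (n-x)*(3*(t-1)) := ⟨(n-x)*(t-1), by ring⟩
        omega
      have hβL : (n-x)*(3*(t-1)) + (3*(t-1)+2) ≤ (n-2)*(3*(t-1)) + 2 := by
        have h1 : (n-x)*(3*(t-1)) + 3*(t-1) ≤ (n-2)*(3*(t-1)) := by
          calc (n-x)*(3*(t-1)) + 3*(t-1) = ((n-x)+1)*(3*(t-1)) := by ring
            _ ≤ (n-2)*(3*(t-1)) := Nat.mul_le_mul_right _ (by omega)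
        omega
      rcases le_or_gt i ((n-x)*(3*(t-1))) with hile | hgt
      · -- i before the block: copy (x 1 2)^t
        right
        apply hcontain x 1 2 (by omega) (by omega) (by omega)
        have hrot := repL_rot (t-1) x 1 2
        rw [show t - 1 + 1 = t by omega] at hrot
        rw [hrot, insertIdx_take_drop _ _ _ (by rw [hslen]; exact hi)]
        have hdropr : List.drop i (List.range ((n-2)*(3*(t-1)) + 2))
            = List.range' i ((n-2)*(3*(t-1)) + 2 - i) := by
          rw [List.range_eq_range',
            show (n-2)*(3*(t-1)) + 2 = i + ((n-2)*(3*(t-1)) + 2 - i) by omega,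
            ← List.range'_append_1, show (0:ℕ) + i = i by omega]
          rw [List.drop_left' (by simp)]
          congr 1
          omega
        have hsub2 : (repL (t-1) [1,2,x] ++ [1,2]).Sublist
            (List.drop i (List.map (fF n t) (List.range ((n-2)*(3*(t-1)) + 2)))) := by
          rw [← List.map_drop, hdropr, ← seg_eq n t x ht (by omega) (by omega)]
          exact sublist_map_range' (fF n t) i ((n-2)*(3*(t-1)) + 2 - i)
            ((n-x)*(3*(t-1))) (3*(t-1)+2) hile (by omega)
        exact ((hsub2.cons₂ x).trans (List.sublist_append_right _ _))
      · rcases le_or_gt i ((n-x)*(3*(t-1)) + 3*(t-1) + 1) with hmid | hbig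
        · -- i inside/adjacent to the block: sparsity violated
          left
          refine hnotsp ((n-x)*(3*(t-1)) + 3*((min (i - (n-x)*(3*(t-1)) - 1) (3*(t-1)-1))/3) + 2)
            ?_ ?_ ?_ ?_
          · omega
          · omega
          · omega
          · have hdival : ((n-x)*(3*(t-1)) + (3*((min (i - (n-x)*(3*(t-1)) - 1) (3*(t-1)-1))/3) + 2))
                / (3*(t-1)) = n - x :=
              div_block t (n-x) _ ht (by omega)
            rw [show (n-x)*(3*(t-1)) + 3*((min (i - (n-x)*(3*(t-1)) - 1) (3*(t-1)-1))/3) + 2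
              = (n-x)*(3*(t-1)) + (3*((min (i - (n-x)*(3*(t-1)) - 1) (3*(t-1)-1))/3) + 2) by ring]
            rw [fF_mod2 _ _ _ (by omega), hdival]
            omega
        · -- i after the block: copy (1 2 x)^t
          right
          apply hcontain 1 2 x (by omega) (by omega) (by omega)
          have hy : repL t [1,2,x] = (repL (t-1) [1,2,x] ++ [1,2]) ++ [x] := by
            have h' := repL_succ_right (t-1) [(1:ℕ),2,x]
            rw [show t - 1 + 1 = t by omega] at h'
            rw [h', List.append_assoc]
            rfl
          rw [hy, insertIdx_take_drop _ _ _ (by rw [hslen]; exact hi)]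
          apply List.Sublist.append
          · have htake : List.take i (List.map (fF n t) (List.range ((n-2)*(3*(t-1)) + 2)))
                = List.map (fF n t) (List.range' 0 i) := by
              rw [← List.map_take, List.take_range, Nat.min_eq_left hi, List.range_eq_range']
            rw [htake, ← seg_eq n t x ht (by omega) (by omega)]
            exact sublist_map_range' (fF n t) 0 i ((n-x)*(3*(t-1))) (3*(t-1)+2)
              (by omega) (by omega)
          · exact (List.nil_sublist _).cons₂ x
end

section
/- Let u be an irreducible sequence with exactly r ≥ 3 distinct letters such that the first two letters of u are equal and the last two letters of u are equal. Let n = r·m for a positive integer m, and for each k = 0, 1, …, m−1 let s_r^{rk}(u) denote the copy of s_r(u) on the letters rk+1, rk+2, …, rk+r (with a_i renamed to rk+i). Then the concatenation s_r^{0}(u) s_r^{r}(u) ⋯ s_r^{r(m−1)}(u) is a u-saturated sequence over the alphabet {1,…,n}. -/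
/-- A sequence is irreducible if it cannot be decomposed as a concatenation of two
nonempty sequences having no letters in common. -/
def IrreducibleSeq {α : Type*} (u : List α) : Prop :=
  ¬ ∃ u₁ u₂ : List α, u₁ ≠ [] ∧ u₂ ≠ [] ∧ u = u₁ ++ u₂ ∧ ∀ x ∈ u₁, x ∉ u₂

/-- The initial segment of length `len` of the periodic sequence
`(base+1)(base+2)⋯(base+r)(base+1)(base+2)⋯` on the `r` letters `base+1,…,base+r`. -/
def periodicSeg (r base len : ℕ) : List ℕ :=
  (List.range len).map (fun i => base + i % r + 1)

namespace Stmt5Aux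
open List

lemma periodicSeg_length (r b len : ℕ) : (periodicSeg r b len).length = len := by
  simp [periodicSeg]

lemma periodicSeg_getElem {r b len : ℕ} {p : ℕ} (hp : p < (periodicSeg r b len).length) :
    (periodicSeg r b len)[p] = b + p % r + 1 := by
  simp [periodicSeg]

lemma build_copy {α β : Type*} [DecidableEq α] {u : List α} {s : List β}
    (hu : u ≠ []) (G : Fin u.length → β) (Φ : Fin u.length → ℕ)
    (hmono : StrictMono Φ) (hb : ∀ k, Φ k < s.length)
    (hlet : ∀ k, s.get ⟨Φ k, hb k⟩ = G k)
    (hcompat : ∀ k l, u.get k = u.get l ↔ G k = G l) :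
    ContainsCopy s u := by
  have hn : 0 < u.length := List.length_pos_iff.mpr hu
  classical
  set f : α → β := fun y =>
    if h : y ∈ u then G ⟨u.idxOf y, List.idxOf_lt_length_iff.mpr h⟩ else G ⟨0, hn⟩ with hf
  have hfu : ∀ k : Fin u.length, f (u.get k) = G k := by
    intro k
    have hmem : u.get k ∈ u := u.get_mem k
    rw [hf]
    dsimp only
    rw [dif_pos hmem]
    exact (hcompat _ k).mp (List.idxOf_get _)
  refine ⟨u.map f, ?_, f, ?_, rfl⟩
  · have hpl : ((List.finRange u.length).map fun k => (⟨Φ k, hb k⟩ : Fin s.length)).Pairwise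
        (· < ·) := by
      rw [List.pairwise_map]
      exact (List.pairwise_lt_finRange _).imp (fun h => by
        simpa [Fin.mk_lt_mk] using hmono h)
    have hsub := List.map_getElem_sublist (l := s) hpl
    have heq : u.map f =
        ((List.finRange u.length).map fun k => (⟨Φ k, hb k⟩ : Fin s.length)).map
          (fun i => s[(i : Fin s.length)]) := by
      rw [List.map_map]
      conv_lhs => rw [← List.map_get_finRange u, List.map_map]
      apply List.map_congr_left
      intro k _
      have := hlet k
      simp only [Function.comp]
      rw [hfu k, ← this]
      rfl
    rw [heq]
    exact hsub
  · intro a ha b hbm hfab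
    rw [hf] at hfab
    dsimp only at hfab
    rw [dif_pos ha, dif_pos hbm] at hfab
    have := (hcompat _ _).mpr hfab
    rw [List.idxOf_get _, List.idxOf_get _] at this
    exact this

lemma extract_copy {α : Type*} {u : List α} {r b N : ℕ}
    (h : ContainsCopy (periodicSeg r b N) u) :
    ∃ J : Fin u.length → ℕ, StrictMono J ∧ (∀ k, J k < N) ∧
      ∀ k l, u.get k = u.get l ↔ J k % r = J l % r := by
  obtain ⟨v, hsub, f, hinj, hmap⟩ := h
  obtain ⟨emb, hemb⟩ := List.sublist_iff_exists_fin_orderEmbedding_get_eq.mp hsub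
  have hlen : u.length = v.length := by rw [hmap, List.length_map]
  refine ⟨fun k => (emb (Fin.cast hlen k)).val, ?_, ?_, ?_⟩
  · intro k l hkl
    exact emb.strictMono hkl
  · intro k
    have h1 := (emb (Fin.cast hlen k)).isLt
    exact lt_of_lt_of_eq h1 (periodicSeg_length r b N)
  · have hv : ∀ k : Fin u.length,
        f (u.get k) = b + (emb (Fin.cast hlen k)).val % r + 1 := by
      intro k
      have h1 : v.get (Fin.cast hlen k) = f (u.get k) := by
        subst hmap
        simp
      have h2 := hemb (Fin.cast hlen k)
      rw [h1] at h2
      rw [h2, List.get_eq_getElem, periodicSeg_getElem]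
    intro k l
    constructor
    · intro hkl
      have := congrArg f hkl
      rw [hv k, hv l] at this
      have h1 := Nat.add_right_cancel this
      exact Nat.add_left_cancel h1
    · intro hkl
      apply hinj _ (u.get_mem k) _ (u.get_mem l)
      rw [hv k, hv l, hkl]

lemma mod_add_iff {r c a b : ℕ} : (a + c) % r = (b + c) % r ↔ a % r = b % r := by
  constructor
  · intro h
    exact Nat.ModEq.add_right_cancel' c h
  · intro h
    exact Nat.ModEq.add_right c h

lemma mod_sub_iff {r c a b : ℕ} (ha : c ≤ a) (hb : c ≤ b) :
    (a - c) % r = (b - c) % r ↔ a % r = b % r := by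
  rw [← mod_add_iff (c := c), Nat.sub_add_cancel ha, Nat.sub_add_cancel hb]

set_option maxHeartbeats 2000000 in
lemma caseA_c {r J1 e : ℕ} (hr : 0 < r) (he : e < r) (hJ1 : r ≤ J1) :
    1 ≤ (J1 - e - 1) % r + 1 ∧ (J1 - e - 1) % r + 1 ≤ r ∧
      (J1 - ((J1 - e - 1) % r + 1)) % r = e := by
  set D := J1 - e - 1 with hD
  have hD1 : J1 = e + 1 + D := by omega
  refine ⟨by omega, by have := Nat.mod_lt D hr; omega, ?_⟩
  have h2 : D % r ≤ D := Nat.mod_le _ _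
  have h3 : J1 - (D % r + 1) = e + (D - D % r) := by omega
  have h4 : D - D % r = r * (D / r) := by
    have := Nat.div_add_mod D r
    omega
  rw [h3, h4, Nat.add_mul_mod_self_left, Nat.mod_eq_of_lt he]

lemma caseB_c {r a e : ℕ} (hr : 0 < r) (he : e < r) :
    (e + r - a % r) % r < r ∧ (a + (e + r - a % r) % r) % r = e := by
  have hma : a % r < r := Nat.mod_lt _ hr
  refine ⟨Nat.mod_lt _ hr, ?_⟩
  set t := e + r - a % r with ht
  have h2 : (a + t % r) % r = (a + t) % r := by
    conv_lhs => rw [Nat.add_mod, Nat.mod_mod_of_dvd _ dvd_rfl]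
    rw [← Nat.add_mod]
  rw [h2]
  have h3 : a + t = e + (r * (a / r) + r) := by
    have := Nat.div_add_mod a r
    omega
  rw [h3, ← Nat.mul_succ, Nat.add_mul_mod_self_left, Nat.mod_eq_of_lt he]

lemma flat_eq_map (r L m : ℕ) :
    (List.range m).flatMap (fun k => periodicSeg r (r * k) L)
      = (List.range (m * L)).map (fun p => r * (p / L) + (p % L) % r + 1) := by
  induction m with
  | zero => simp
  | succ M ih =>
    rw [List.range_succ, List.flatMap_append, ih, Nat.succ_mul, List.range_add,
      List.map_append, List.map_map]
    congr 1
    simp only [List.flatMap_cons, List.flatMap_nil, List.append_nil]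
    unfold periodicSeg
    apply List.map_congr_left
    intro i hi
    have hiL : i < L := List.mem_range.mp hi
    have hL0 : 0 < L := by omega
    simp only [Function.comp]
    have hdiv : (M * L + i) / L = M := by
      rw [Nat.mul_comm M L, Nat.mul_add_div hL0, Nat.div_eq_of_lt hiL, Nat.add_zero]
    have hmod : (M * L + i) % L = i := by
      rw [Nat.mul_comm M L, Nat.mul_add_mod, Nat.mod_eq_of_lt hiL]
    rw [hdiv, hmod]

lemma mem_flat_le {r L M y : ℕ} (hr : 0 < r)
    (hy : y ∈ (List.range M).flatMap (fun k => periodicSeg r (r * k) L)) : y ≤ r * M := by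
  rw [List.mem_flatMap] at hy
  obtain ⟨k, hk, hmem⟩ := hy
  rw [List.mem_range] at hk
  unfold periodicSeg at hmem
  rw [List.mem_map] at hmem
  obtain ⟨i, _, rfl⟩ := hmem
  have h1 : i % r < r := Nat.mod_lt _ hr
  have h2 : r * k + i % r + 1 ≤ r * (k + 1) := by
    rw [Nat.mul_succ]; omega
  have h3 : r * (k + 1) ≤ r * M := Nat.mul_le_mul_left r hk
  omega

lemma mem_periodicSeg_ge {r b L y : ℕ} (hy : y ∈ periodicSeg r b L) : b + 1 ≤ y := by
  unfold periodicSeg at hy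
  rw [List.mem_map] at hy
  obtain ⟨i, _, rfl⟩ := hy
  omega

lemma copy_shift {α : Type*} [DecidableEq α] {u : List α} {r b L : ℕ} (hu : u ≠ [])
    (h : ContainsCopy (periodicSeg r b L) u) : ContainsCopy (periodicSeg r 0 L) u := by
  obtain ⟨J, hmono, hlt, hcompat⟩ := extract_copy h
  refine build_copy hu (fun k => 0 + J k % r + 1) J hmono
    (fun k => lt_of_lt_of_eq (hlt k) (periodicSeg_length r 0 L).symm) ?_ ?_
  · intro k
    rw [List.get_eq_getElem, periodicSeg_getElem]
  · intro k l
    rw [hcompat k l]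
    show _ ↔ 0 + J k % r + 1 = 0 + J l % r + 1
    constructor <;> intro h' <;> omega

lemma avoid_flat {α : Type*} [DecidableEq α] {u : List α} {r L : ℕ} (hr : 0 < r) (hu : u ≠ [])
    (hirr : IrreducibleSeq u)
    (havoid : ¬ ContainsCopy (periodicSeg r 0 L) u) :
    ∀ M : ℕ, ¬ ContainsCopy ((List.range M).flatMap (fun k => periodicSeg r (r * k) L)) u := by
  intro M
  induction M with
  | zero =>
    rintro ⟨v, hsub, f, hinj, hmap⟩
    rw [List.range_zero, List.flatMap_nil] at hsub
    rw [List.sublist_nil.mp hsub] at hmap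
    exact hu (List.map_eq_nil_iff.mp hmap.symm)
  | succ M ih =>
    rintro ⟨v, hsub, f, hinj, hmap⟩
    rw [List.range_succ, List.flatMap_append] at hsub
    obtain ⟨v1, v2, hveq, hs1, hs2⟩ := List.sublist_append_iff.mp hsub
    rw [hveq] at hmap
    obtain ⟨u1, u2, hueq, hm1, hm2⟩ := List.map_eq_append_iff.mp hmap.symm
    have hs2' : v2 <+ periodicSeg r (r * M) L := by
      simpa using hs2
    rcases eq_or_ne u1 [] with h1 | h1
    · apply havoid
      apply copy_shift hu (b := r * M)
      refine ⟨v2, hs2', f, hinj, ?_⟩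
      subst hueq
      subst h1
      rw [List.nil_append]
      exact hm2.symm
    rcases eq_or_ne u2 [] with h2 | h2
    · apply ih
      refine ⟨v1, hs1, f, hinj, ?_⟩
      subst hueq
      subst h2
      rw [List.append_nil]
      exact hm1.symm
    · apply hirr
      refine ⟨u1, u2, h1, h2, hueq, ?_⟩
      intro y hy1 hy2
      have hf1 : f y ∈ v1 := hm1 ▸ List.mem_map_of_mem (f := f) hy1
      have hf2 : f y ∈ v2 := hm2 ▸ List.mem_map_of_mem (f := f) hy2
      have hb1 : f y ≤ r * M := mem_flat_le hr (hs1.subset hf1)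
      have hb2 : r * M + 1 ≤ f y := mem_periodicSeg_ge (hs2'.subset hf2)
      omega

lemma insertIdx_getElem_up {β : Type*} {s : List β} {x : β} {i q : ℕ} (hq : i ≤ q)
    (hqs : q < s.length) (hb : q + 1 < (s.insertIdx i x).length) :
    (s.insertIdx i x)[q + 1] = s[q] := by
  have h1 : q + 1 = i + (q - i) + 1 := by omega
  have h2 : i + (q - i) < s.length := by omega
  have h3 : i + (q - i) + 1 < (s.insertIdx i x).length := by omega
  calc (s.insertIdx i x)[q + 1] = (s.insertIdx i x)[i + (q - i) + 1]'h3 := getElem_congr_idx h1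
    _ = s[i + (q - i)]'h2 := List.getElem_insertIdx_add_succ s x i (q - i) h2
    _ = s[q] := getElem_congr_idx (by omega)

lemma caseC {r L m jb e x i : ℕ} (s : List ℕ)
    (hr3 : 3 ≤ r) (he : e < r) (hxeq : x = r * jb + e + 1) (hLr : r + 1 ≤ L)
    (hslen : s.length = m * L)
    (hsget : ∀ (p : ℕ) (hp : p < s.length), s[p] = r * (p / L) + p % L % r + 1)
    (hjbm : jb + 1 ≤ m)
    (hgt : L * jb < i) (hlt2 : i < L * jb + L) :
    ¬ Sparse r (s.insertIdx i x) := by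
  intro hsp
  set t := i - L * jb with htdef
  have ht1 : 1 ≤ t := by omega
  have htL : t ≤ L - 1 := by omega
  have hieq : i = L * jb + t := by omega
  have hml : L * (jb + 1) ≤ L * m := Nat.mul_le_mul_left L hjbm
  have hmul : L * (jb + 1) = L * jb + L := Nat.mul_succ L jb
  have hcomm : L * m = m * L := Nat.mul_comm L m
  have hi_le : i ≤ s.length := by omega
  have hlins : (s.insertIdx i x).length = m * L + 1 := by
    rw [List.length_insertIdx_of_le_length hi_le _, hslen]
  have hgetblock : ∀ (p : ℕ) (hp : p < L) (hps : L * jb + p < s.length),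
      s[L * jb + p] = r * jb + p % r + 1 := by
    intro p hp hps
    rw [hsget _ hps]
    have hdiv : (L * jb + p) / L = jb := by
      rw [Nat.mul_add_div (by omega), Nat.div_eq_of_lt hp, Nat.add_zero]
    have hmod : (L * jb + p) % L = p := by
      rw [Nat.mul_add_mod, Nat.mod_eq_of_lt hp]
    rw [hdiv, hmod]
  have hselfi : i < (s.insertIdx i x).length := by omega
  have hxat : (s.insertIdx i x)[i] = x := List.getElem_insertIdx_self hselfi
  rcases le_or_gt e t with het | hte
  · have hmodeq := Nat.div_add_mod (t - e) r
    set p := e + r * ((t - e) / r) with hp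
    have hmr : (t - e) % r < r := Nat.mod_lt _ (by omega)
    have hpt : p ≤ t := by omega
    have htpr : t - p < r := by omega
    have hpe : p % r = e := by rw [hp, Nat.add_mul_mod_self_left, Nat.mod_eq_of_lt he]
    rcases lt_or_ge p t with hplt | hpge
    · have hidx1lt : L * jb + p < i := by omega
      have hidx1s : L * jb + p < s.length := by omega
      apply hsp (L * jb + p) i hidx1lt hselfi (by omega)
      rw [List.get_eq_getElem, List.get_eq_getElem]
      have e1 := List.getElem_insertIdx_of_lt (l := s) (x := x) hidx1lt (by omega)
      rw [e1, hgetblock p (by omega) hidx1s, hpe, hxat, hxeq]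
    · have hpt' : p = t := by omega
      have hb2 : i + 1 < (s.insertIdx i x).length := by omega
      have hqs : i < s.length := by omega
      apply hsp i (i + 1) (by omega) hb2 (by omega)
      rw [List.get_eq_getElem, List.get_eq_getElem]
      rw [hxat]
      rw [insertIdx_getElem_up (le_refl i) hqs hb2]
      have e3 : s[i]'hqs = r * jb + t % r + 1 := by
        have := hgetblock t (by omega) (by omega)
        calc s[i]'hqs = s[L * jb + t]'(by omega) := getElem_congr_idx hieq
          _ = r * jb + t % r + 1 := this
      rw [e3]
      have : t % r = e := by rw [← hpt', hpe]
      rw [this, hxeq]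
  · have hb2 : L * jb + e + 1 < (s.insertIdx i x).length := by omega
    have hqs : L * jb + e < s.length := by omega
    apply hsp i (L * jb + e + 1) (by omega) hb2 (by omega)
    rw [List.get_eq_getElem, List.get_eq_getElem]
    rw [hxat]
    rw [insertIdx_getElem_up (by omega) hqs hb2]
    rw [hgetblock e (by omega) hqs, Nat.mod_eq_of_lt he, hxeq]


lemma caseB {α : Type*} [DecidableEq α] {u : List α} {r L m jb e x i c : ℕ} {s : List ℕ}
    (hune : u ≠ []) (hr0 : 0 < r) (he : e < r) (hxeq : x = r * jb + e + 1)
    (hslen : s.length = m * L)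
    (hsget : ∀ (p : ℕ) (hp : p < s.length), s[p] = r * (p / L) + p % L % r + 1)
    (hjbm : jb + 1 ≤ m) (hL0 : 0 < L)
    (J : Fin u.length → ℕ) (hJmono : StrictMono J) (hJlt : ∀ k, J k < L + 1)
    (hJcomp : ∀ k l, u.get k = u.get l ↔ J k % r = J l % r)
    (kn1 kn2 : Fin u.length) (hkn1 : kn1.val = u.length - 1) (hkn2 : kn2.val = u.length - 2)
    (hn3 : 3 ≤ u.length)
    (hulast : u.get kn1 = u.get kn2)
    (hJn2 : J kn2 + r ≤ L)
    (hc : c < r) (hce : (J kn2 + c) % r = e)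
    (hi : i ≤ s.length) (hB : L * jb + L ≤ i) :
    ContainsCopy (s.insertIdx i x) u := by
  have hcomm : L * m = m * L := Nat.mul_comm L m
  have hml : L * (jb + 1) ≤ L * m := Nat.mul_le_mul_left L hjbm
  have hmul : L * (jb + 1) = L * jb + L := Nat.mul_succ L jb
  have hlins : (s.insertIdx i x).length = s.length + 1 := List.length_insertIdx_of_le_length hi _
  have hJle : ∀ k : Fin u.length, k.val ≠ u.length - 1 → J k ≤ L - r := by
    intro k hk
    have h1 : k ≤ kn2 := by
      rw [Fin.le_def, hkn2]
      have := k.isLt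
      omega
    have := hJmono.monotone h1
    omega
  have key : ∀ l : Fin u.length, (u.get kn1 = u.get l) ↔ (J kn2 % r = J l % r) := by
    intro l
    rw [hulast]
    exact hJcomp _ l
  have key2 : ∀ l : Fin u.length, (u.get l = u.get kn1) ↔ (J l % r = J kn2 % r) := by
    intro l
    rw [eq_comm, key l, eq_comm]
  refine build_copy hune
    (fun k => if k.val = u.length - 1 then x else r * jb + (J k + c) % r + 1)
    (fun k => if k.val = u.length - 1 then i else L * jb + (J k + c)) ?_ ?_ ?_ ?_
  · intro k l hkl
    dsimp only
    have hkv : k.val < l.val := hkl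
    have hlv := l.isLt
    split_ifs with h1 h2 h2
    · omega
    · exfalso; omega
    · have := hJle k (by omega)
      omega
    · have := hJmono hkl
      omega
  · intro k
    split_ifs with h1
    · omega
    · have := hJle k h1
      omega
  · intro k
    rw [List.get_eq_getElem]
    split_ifs with h1
    · exact List.getElem_insertIdx_self _
    · have hJk := hJle k h1
      have hlt : L * jb + (J k + c) < i := by omega
      have hs : L * jb + (J k + c) < s.length := by omega
      rw [List.getElem_insertIdx_of_lt hlt (by omega)]
      rw [hsget _ hs]
      have hwL : J k + c < L := by omega
      have hdiv : (L * jb + (J k + c)) / L = jb := by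
        rw [Nat.mul_add_div hL0, Nat.div_eq_of_lt hwL, Nat.add_zero]
      have hmod : (L * jb + (J k + c)) % L = J k + c := by
        rw [Nat.mul_add_mod, Nat.mod_eq_of_lt hwL]
      rw [hdiv, hmod]
  · intro k l
    split_ifs with h1 h2 h2
    · have hkeq : k = l := Fin.ext (by omega)
      subst hkeq
      simp
    · have hk' : k = kn1 := Fin.ext (by omega)
      rw [hk', key l, ← mod_add_iff (c := c), hce, hxeq]
      constructor <;> intro h' <;> omega
    · have hl' : l = kn1 := Fin.ext (by omega)
      rw [hl', key2 k, ← mod_add_iff (c := c), hce, hxeq]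
      constructor <;> intro h' <;> omega
    · rw [hJcomp k l, ← mod_add_iff (c := c)]
      constructor <;> intro h' <;> omega

lemma caseA {α : Type*} [DecidableEq α] {u : List α} {r L m jb e x i c : ℕ} {s : List ℕ}
    (hune : u ≠ []) (hr0 : 0 < r) (he : e < r) (hxeq : x = r * jb + e + 1)
    (hslen : s.length = m * L)
    (hsget : ∀ (p : ℕ) (hp : p < s.length), s[p] = r * (p / L) + p % L % r + 1)
    (hjbm : jb + 1 ≤ m) (hL0 : 0 < L)
    (J : Fin u.length → ℕ) (hJmono : StrictMono J) (hJlt : ∀ k, J k < L + 1)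
    (hJcomp : ∀ k l, u.get k = u.get l ↔ J k % r = J l % r)
    (k0 k1 : Fin u.length) (hk0 : k0.val = 0) (hk1 : k1.val = 1)
    (hn3 : 3 ≤ u.length)
    (hufirst : u.get k0 = u.get k1)
    (hJ1r : r ≤ J k1)
    (hc1 : 1 ≤ c) (hcr : c ≤ r) (hce : (J k1 - c) % r = e)
    (hi : i ≤ s.length) (hA : i ≤ L * jb) :
    ContainsCopy (s.insertIdx i x) u := by
  have hcomm : L * m = m * L := Nat.mul_comm L m
  have hml : L * (jb + 1) ≤ L * m := Nat.mul_le_mul_left L hjbm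
  have hmul : L * (jb + 1) = L * jb + L := Nat.mul_succ L jb
  have hlins : (s.insertIdx i x).length = s.length + 1 := List.length_insertIdx_of_le_length hi _
  have hJge : ∀ k : Fin u.length, k.val ≠ 0 → r ≤ J k := by
    intro k hk
    have h1 : k1 ≤ k := by
      rw [Fin.le_def, hk1]
      omega
    have := hJmono.monotone h1
    omega
  have key : ∀ l : Fin u.length, (u.get k0 = u.get l) ↔ (J k1 % r = J l % r) := by
    intro l
    rw [hufirst]
    exact hJcomp _ l
  have key2 : ∀ l : Fin u.length, (u.get l = u.get k0) ↔ (J l % r = J k1 % r) := by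
    intro l
    rw [eq_comm, key l, eq_comm]
  refine build_copy hune
    (fun k => if k.val = 0 then x else r * jb + (J k - c) % r + 1)
    (fun k => if k.val = 0 then i else L * jb + (J k - c) + 1) ?_ ?_ ?_ ?_
  · intro k l hkl
    dsimp only
    have hkv : k.val < l.val := hkl
    split_ifs with h1 h2 h2
    · omega
    · omega
    · exfalso; omega
    · have h3 := hJmono hkl
      have h4 := hJge k h1
      omega
  · intro k
    split_ifs with h1
    · omega
    · have h2 := hJlt k
      have h3 := hJge k h1
      omega
  · intro k
    rw [List.get_eq_getElem]
    split_ifs with h1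
    · exact List.getElem_insertIdx_self _
    · have h2 := hJlt k
      have h3 := hJge k h1
      have hq : i ≤ L * jb + (J k - c) := by omega
      have hqs : L * jb + (J k - c) < s.length := by omega
      have hb1 : L * jb + (J k - c) + 1 < (s.insertIdx i x).length := by omega
      rw [insertIdx_getElem_up hq hqs hb1]
      rw [hsget _ hqs]
      have hwL : J k - c < L := by omega
      have hdiv : (L * jb + (J k - c)) / L = jb := by
        rw [Nat.mul_add_div hL0, Nat.div_eq_of_lt hwL, Nat.add_zero]
      have hmod : (L * jb + (J k - c)) % L = J k - c := by
        rw [Nat.mul_add_mod, Nat.mod_eq_of_lt hwL]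
      rw [hdiv, hmod]
  · intro k l
    have hsub : ∀ kk ll : Fin u.length, kk.val ≠ 0 → ll.val ≠ 0 →
        ((J kk - c) % r = (J ll - c) % r ↔ J kk % r = J ll % r) := by
      intro kk ll hkk hll
      exact mod_sub_iff (le_trans hcr (hJge kk hkk)) (le_trans hcr (hJge ll hll))
    split_ifs with h1 h2 h2
    · have hkeq : k = l := Fin.ext (by omega)
      subst hkeq
      simp
    · have hk' : k = k0 := Fin.ext (by omega)
      have hone : (1 : ℕ) ≠ 0 := one_ne_zero
      rw [hk', key l, ← hsub k1 l (by omega) h2, hce, hxeq]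
      constructor <;> intro h' <;> omega
    · have hl' : l = k0 := Fin.ext (by omega)
      rw [hl', key2 k, ← hsub k k1 h1 (by omega), hce, hxeq]
      constructor <;> intro h' <;> omega
    · rw [hJcomp k l, ← hsub k l h1 h2]
      constructor <;> intro h' <;> omega

end Stmt5Aux

set_option maxHeartbeats 1000000 in
theorem stmt5 {α : Type*} [DecidableEq α] (u : List α)
    (hr : 3 ≤ u.toFinset.card)
    (hfirst : u[0]? = u[1]?)
    (hlast : u[u.length - 1]? = u[u.length - 2]?)
    (hirr : IrreducibleSeq u)
    (L : ℕ)
    (havoid : ¬ ContainsCopy (periodicSeg u.toFinset.card 0 L) u)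
    (hmax : ContainsCopy (periodicSeg u.toFinset.card 0 (L + 1)) u)
    (m : ℕ) (hm : 1 ≤ m) :
    Saturated u
      ((List.range m).flatMap (fun k => periodicSeg u.toFinset.card (u.toFinset.card * k) L))
      (Set.Icc 1 (u.toFinset.card * m)) := by
  classical
  set r := u.toFinset.card with hrdef
  have hr0 : 0 < r := by omega
  have hune : u ≠ [] := by
    intro h
    rw [hrdef, h] at hr
    simp at hr
  have hn3 : 3 ≤ u.length := le_trans hr (List.toFinset_card_le u)
  have h0n : 0 < u.length := by omega
  have h1n : 1 < u.length := by omega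
  have hn1n : u.length - 1 < u.length := by omega
  have hn2n : u.length - 2 < u.length := by omega
  -- first two letters equal
  have hu01 : u.get ⟨0, h0n⟩ = u.get ⟨1, h1n⟩ := by
    rw [List.getElem?_eq_getElem h0n, List.getElem?_eq_getElem h1n] at hfirst
    simpa using hfirst
  have hulast : u.get ⟨u.length - 1, hn1n⟩ = u.get ⟨u.length - 2, hn2n⟩ := by
    rw [List.getElem?_eq_getElem hn1n, List.getElem?_eq_getElem hn2n] at hlast
    simpa using hlast
  -- extract the canonical copy from hmax
  obtain ⟨J, hJmono, hJlt, hJcomp⟩ := Stmt5Aux.extract_copy hmax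
  set k0 : Fin u.length := ⟨0, h0n⟩ with hk0def
  set k1 : Fin u.length := ⟨1, h1n⟩ with hk1def
  set kn1 : Fin u.length := ⟨u.length - 1, hn1n⟩ with hkn1def
  set kn2 : Fin u.length := ⟨u.length - 2, hn2n⟩ with hkn2def
  have hJ01 : J k0 % r = J k1 % r := (hJcomp k0 k1).mp hu01
  have hlt01 : J k0 < J k1 := hJmono (show k0 < k1 by simp [hk0def, hk1def, Fin.lt_def])
  have hdvd01 : r ∣ J k1 - J k0 := (Nat.modEq_iff_dvd' hlt01.le).mp hJ01
  have hJ1r : r ≤ J k1 := by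
    have := Nat.le_of_dvd (by omega) hdvd01
    omega
  have hJl : J kn2 % r = J kn1 % r := (hJcomp kn2 kn1).mp hulast.symm
  have hltl : J kn2 < J kn1 := hJmono (show kn2 < kn1 by
    simp only [hkn2def, hkn1def, Fin.lt_def]
    omega)
  have hdvdl : r ∣ J kn1 - J kn2 := (Nat.modEq_iff_dvd' hltl.le).mp hJl
  have hJn2 : J kn2 + r ≤ L := by
    have h1 := Nat.le_of_dvd (by omega) hdvdl
    have h2 := hJlt kn1
    omega
  have hLr : r + 1 ≤ L := by
    have h2 := hJlt kn1
    have h3 : J k1 < J kn1 := hJmono (show k1 < kn1 by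
      simp only [hk1def, hkn1def, Fin.lt_def]
      omega)
    omega
  have hL0 : 0 < L := by omega
  set s := (List.range m).flatMap (fun k => periodicSeg r (r * k) L) with hsdef
  have hsmap : s = (List.range (m * L)).map (fun p => r * (p / L) + p % L % r + 1) :=
    Stmt5Aux.flat_eq_map r L m
  have hslen : s.length = m * L := by rw [hsmap, List.length_map, List.length_range]
  have hsget : ∀ (p : ℕ) (hp : p < s.length), s[p] = r * (p / L) + p % L % r + 1 := by
    intro p hp
    have hp' : p < m * L := by rwa [hslen] at hp
    simp only [hsmap]
    rw [List.getElem_map, List.getElem_range]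
  refine ⟨?_, ?_, ?_, ?_⟩
  · -- sparse
    intro i j hij hj hjr
    rw [List.get_eq_getElem, List.get_eq_getElem, hsget i _, hsget j _]
    have hjm : j < m * L := by rwa [hslen] at hj
    have hdij : i / L ≤ j / L := Nat.div_le_div_right hij.le
    have hdiv_i := Nat.div_add_mod i L
    have hdiv_j := Nat.div_add_mod j L
    have hmi : i % L < L := Nat.mod_lt _ hL0
    have hmj : j % L < L := Nat.mod_lt _ hL0
    rcases lt_or_ge (i / L) (j / L) with hq | hq
    · intro heq
      have h1 : i % L % r < r := Nat.mod_lt _ hr0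
      have h2 : j % L % r < r := Nat.mod_lt _ hr0
      have h3 : r * (i / L + 1) ≤ r * (j / L) := Nat.mul_le_mul_left r hq
      have h4 : r * (i / L + 1) = r * (i / L) + r := Nat.mul_succ r (i / L)
      omega
    · have hq' : i / L = j / L := le_antisymm hdij hq
      intro heq
      rw [hq'] at hdiv_i heq
      have h5 : i % L < j % L := by omega
      have h6 : j % L - i % L < r := by omega
      have h7 : i % L % r = j % L % r := by omega
      have h8 : r ∣ j % L - i % L := (Nat.modEq_iff_dvd' h5.le).mp h7
      have h9 := Nat.le_of_dvd (by omega) h8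
      omega
  · -- avoids u
    exact Stmt5Aux.avoid_flat hr0 hune hirr havoid m
  · -- membership
    intro y hy
    rw [hsmap, List.mem_map] at hy
    obtain ⟨p, hp, rfl⟩ := hy
    rw [List.mem_range] at hp
    rw [Set.mem_Icc]
    have hq : p / L < m := (Nat.div_lt_iff_lt_mul hL0).mpr (by omega)
    have h1 : p % L % r < r := Nat.mod_lt _ hr0
    have h2 : r * (p / L + 1) ≤ r * m := Nat.mul_le_mul_left r hq
    have h3 : r * (p / L + 1) = r * (p / L) + r := Nat.mul_succ r (p / L)
    omega
  · -- insertion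
    intro x hx i hi
    rw [Set.mem_Icc] at hx
    obtain ⟨hx1, hx2⟩ := hx
    have hdm := Nat.div_add_mod (x - 1) r
    set jb := (x - 1) / r with hjbdef
    set e := (x - 1) % r with hedef
    have he : e < r := Nat.mod_lt _ hr0
    have hxeq : x = r * jb + e + 1 := by omega
    have hjbm : jb + 1 ≤ m := by
      have h1 : jb < m := by
        rw [hjbdef, Nat.div_lt_iff_lt_mul hr0]
        have h2 : r * m = m * r := Nat.mul_comm r m
        omega
      omega
    rcases le_or_gt i (L * jb) with hA | hgt
    · right
      obtain ⟨hc1, hcr, hce⟩ := Stmt5Aux.caseA_c (J1 := J k1) hr0 he hJ1r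
      exact Stmt5Aux.caseA hune hr0 he hxeq hslen hsget hjbm hL0 J hJmono hJlt hJcomp
        k0 k1 rfl rfl hn3 hu01 hJ1r hc1 hcr hce hi hA
    rcases le_or_gt (L * jb + L) i with hB | hlt2
    · right
      obtain ⟨hc, hce⟩ := Stmt5Aux.caseB_c (a := J kn2) hr0 he
      exact Stmt5Aux.caseB hune hr0 he hxeq hslen hsget hjbm hL0 J hJmono hJlt hJcomp
        kn1 kn2 rfl rfl hn3 hulast hJn2 hc hce hi hB
    · left
      exact Stmt5Aux.caseC s hr he hxeq hLr hslen hsget hjbm hgt hlt2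
end

section
/- Let u be a sequence with exactly r ≥ 3 distinct letters such that the first two letters of u are equal and the last two letters of u are equal. Write s_r(u) = (a_1 a_2 ⋯ a_r)^t a_1 a_2 ⋯ a_j with t ≥ 1 and 0 ≤ j < r, and define s_r'(u) = (a_1 a_2 ⋯ a_r a_{r+1})^t a_1 a_2 ⋯ a_j on the alphabet {a_1,…,a_{r+1}}, where a_{r+1} is a new letter. Then: (i) s_r'(u) is u-saturated over the alphabet {a_1,…,a_{r+1}}; and (ii) for every i with 1 ≤ i ≤ r+1, both the sequence obtained by prepending a_i to s_r'(u) and the sequence obtained by appending a_i to s_r'(u) contain a copy of u. -/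
/-- `srPrime r t j = (a₁ a₂ ⋯ a_{r+1})^t a₁ a₂ ⋯ a_j`, on the letters `aᵢ = i`. -/
def srPrime (r t j : ℕ) : List ℕ :=
  periodicSeg (r + 1) 0 ((r + 1) * t) ++ (List.range j).map (· + 1)

lemma periodicSeg_length (r base len : ℕ) : (periodicSeg r base len).length = len := by
  simp [periodicSeg]

lemma periodicSeg_getElem {r base len : ℕ} {i : ℕ} (h : i < len) :
    (periodicSeg r base len)[i]'(by simpa [periodicSeg_length]) = base + i % r + 1 := by
  simp [periodicSeg]

lemma srPrime_eq (r t j : ℕ) (hj : j ≤ r) :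
    srPrime r t j = periodicSeg (r+1) 0 ((r+1)*t + j) := by
  apply List.ext_getElem
  · simp [srPrime, periodicSeg]
  intro i h1 h2
  rw [periodicSeg_getElem (by simpa [periodicSeg_length] using h2)]
  simp only [srPrime]
  rcases lt_or_ge i ((r+1)*t) with h | h
  · rw [List.getElem_append_left (by simpa [periodicSeg_length] using h)]
    rw [periodicSeg_getElem h]
  · have hlen : (periodicSeg (r+1) 0 ((r+1)*t)).length = (r+1)*t := periodicSeg_length _ _ _
    rw [List.getElem_append_right (by omega)]
    have hi : i - (r+1)*t < j := by
      have := periodicSeg_length (r+1) 0 ((r+1)*t+j)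
      simp [periodicSeg_length] at h2 ⊢
      omega
    simp only [hlen, List.getElem_map, List.getElem_range]
    have : i = (r+1)*t + (i - (r+1)*t) := by omega
    rw [this, Nat.mul_add_mod]
    have h3 : (i - (r+1)*t) % (r+1) = i - (r+1)*t := Nat.mod_eq_of_lt (by omega)
    omega

lemma srPrime_length (r t j : ℕ) (hj : j ≤ r) : (srPrime r t j).length = (r+1)*t + j := by
  rw [srPrime_eq r t j hj, periodicSeg_length]

lemma srPrime_getElem {r t j : ℕ} (hj : j ≤ r) {p : ℕ} (h : p < (r+1)*t + j) :
    (srPrime r t j)[p]'(by rw [srPrime_length r t j hj]; exact h) = p % (r+1) + 1 := by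
  have h2 : (srPrime r t j)[p]'(by rw [srPrime_length r t j hj]; exact h)
      = (periodicSeg (r+1) 0 ((r+1)*t+j))[p]'(by rw [periodicSeg_length]; exact h) := by
    congr 1
    exact srPrime_eq r t j hj
  rw [h2, periodicSeg_getElem h]
  omega

lemma containsCopy_iff {α A : Type*} [DecidableEq α] (u : List α) (s : List A) (hu : u ≠ []) :
    ContainsCopy s u ↔ ∃ φ : Fin u.length → Fin s.length, StrictMono φ ∧
      ∀ i k : Fin u.length, (s.get (φ i) = s.get (φ k) ↔ u.get i = u.get k) := by
  constructor
  · rintro ⟨v, hsub, f, hinj, rfl⟩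
    obtain ⟨e, he⟩ := List.sublist_iff_exists_fin_orderEmbedding_get_eq.1 hsub
    refine ⟨fun i => e ⟨i, by simpa using i.2⟩, ?_, ?_⟩
    · intro i k hik
      exact e.strictMono (by simpa using hik)
    · intro i k
      have h1 : ∀ i : Fin u.length, s.get (e ⟨i, by simpa using i.2⟩) = f (u.get i) := by
        intro i
        rw [← he ⟨i, by simpa using i.2⟩]
        simp
      rw [h1 i, h1 k]
      constructor
      · intro h
        exact hinj _ (List.get_mem u _) _ (List.get_mem u _) h
      · intro h; rw [h]
  · rintro ⟨φ, hmono, hpat⟩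
    have hulen : 0 < u.length := List.length_pos_iff.2 hu
    set f : α → A := fun a => s.get (φ ⟨min (u.idxOf a) (u.length - 1), by omega⟩) with hf
    have hfa : ∀ i : Fin u.length, f (u.get i) = s.get (φ i) := by
      intro i
      have hm : u.get i ∈ u := List.get_mem u i
      have hidx : u.idxOf (u.get i) < u.length := List.idxOf_lt_length_iff.2 hm
      have hmin : min (u.idxOf (u.get i)) (u.length - 1) = u.idxOf (u.get i) := by omega
      have hg : u.get ⟨min (u.idxOf (u.get i)) (u.length - 1), by omega⟩ = u.get i := by
        simp only [hmin]
        exact List.idxOf_get hidx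
      exact (hpat _ _).2 hg
    refine ⟨u.map f, ?_, f, ?_, rfl⟩
    · rw [List.sublist_iff_exists_fin_orderEmbedding_get_eq]
      refine ⟨OrderEmbedding.ofStrictMono
        (fun ix => φ ⟨ix, by simpa using ix.2⟩) ?_, ?_⟩
      · intro a b hab
        exact hmono (by simpa using hab)
      · intro ix
        rw [show ∀ n, (u.map f).get n = f (u.get ⟨n, by simpa using n.2⟩) from fun n => by simp]
        rw [hfa ⟨ix, by simpa using ix.2⟩]
        simp
        rfl
    · intro a ha b hb hab
      have hia : u.idxOf a < u.length := List.idxOf_lt_length_iff.2 ha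
      have hib : u.idxOf b < u.length := List.idxOf_lt_length_iff.2 hb
      have h1 : f a = s.get (φ ⟨u.idxOf a, hia⟩) := by
        simp only [hf]
        congr 2
        simp only [Fin.mk.injEq]
        omega
      have h2 : f b = s.get (φ ⟨u.idxOf b, hib⟩) := by
        simp only [hf]
        congr 2
        simp only [Fin.mk.injEq]
        omega
      rw [h1, h2] at hab
      have := (hpat _ _).1 hab
      rwa [List.idxOf_get hia, List.idxOf_get hib] at this

lemma mod_shift {a b c M : ℕ} : (a + c) % M = (b + c) % M ↔ a % M = b % M :=
  ⟨fun h => Nat.ModEq.add_right_cancel' c h, fun h => Nat.ModEq.add_right c h⟩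

lemma periodicSeg_get {r base len : ℕ} {p : ℕ} (hlt : p < len)
    (h : p < (periodicSeg r base len).length) :
    (periodicSeg r base len).get ⟨p, h⟩ = base + p % r + 1 := by
  rw [List.get_eq_getElem]
  exact periodicSeg_getElem hlt

lemma srPrime_get {r t j : ℕ} (hj : j ≤ r) {p : ℕ} (hlt : p < (r+1)*t+j)
    (h : p < (srPrime r t j).length) :
    (srPrime r t j).get ⟨p, h⟩ = p % (r+1) + 1 := by
  rw [List.get_eq_getElem]
  exact srPrime_getElem hj hlt

lemma exists_mod_embedding {α : Type*} [DecidableEq α] {u : List α} {r len : ℕ}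
    (hu : u ≠ []) (h : ContainsCopy (periodicSeg r 0 len) u) :
    ∃ q : Fin u.length → ℕ, StrictMono q ∧ (∀ i, q i < len) ∧
      ∀ i k, (q i % r = q k % r ↔ u.get i = u.get k) := by
  obtain ⟨φ, hmono, hpat⟩ := (containsCopy_iff u _ hu).1 h
  have hlt : ∀ i, (φ i : ℕ) < len := fun i => by
    have := (φ i).2; simpa [periodicSeg_length] using this
  refine ⟨fun i => (φ i : ℕ), fun i k hik => hmono hik, hlt, fun i k => ?_⟩
  dsimp only
  rw [← hpat i k]
  have hg : ∀ i, (periodicSeg r 0 len).get (φ i) = (φ i : ℕ) % r + 1 := by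
    intro i
    have := periodicSeg_get (hlt i) (φ i).2
    simpa using this
  rw [hg i, hg k]
  omega

lemma containsCopy_of_mod_embedding {α : Type*} [DecidableEq α] {u : List α} {r len : ℕ}
    (hu : u ≠ []) (q : Fin u.length → ℕ) (hmono : StrictMono q) (hlt : ∀ i, q i < len)
    (hpat : ∀ i k, (q i % r = q k % r ↔ u.get i = u.get k)) :
    ContainsCopy (periodicSeg r 0 len) u := by
  apply (containsCopy_iff u _ hu).2
  refine ⟨fun i => ⟨q i, by rw [periodicSeg_length]; exact hlt i⟩, ?_, ?_⟩
  · intro i k hik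
    exact hmono hik
  · intro i k
    rw [← hpat i k]
    rw [periodicSeg_get (hlt i), periodicSeg_get (hlt k)]
    omega

lemma sparse_srPrime (r t j ρ : ℕ) (hj : j ≤ r) (hρ : ρ ≤ r + 1) :
    Sparse ρ (srPrime r t j) := by
  intro a b hab hb hwin
  have hb' : b < (r+1)*t + j := by rwa [srPrime_length r t j hj] at hb
  rw [srPrime_get hj (by omega), srPrime_get hj hb']
  intro heq
  have hmod : a % (r+1) = b % (r+1) := by omega
  have hdvd : (r+1) ∣ b - a := (Nat.modEq_iff_dvd' (by omega)).1 hmod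
  have := Nat.le_of_dvd (by omega) hdvd
  omega

lemma not_sparse_insert_s6 (r t j m x p : ℕ) (hj : j ≤ r) (hm : m ≤ (r+1)*t + j)
    (hp : p < (r+1)*t + j) (hl : p % (r+1) + 1 = x) (h1 : m < p + r) (h2 : p + 1 < m + r) :
    ¬ Sparse r ((srPrime r t j).insertIdx m x) := by
  intro hs
  have hmlen : m ≤ (srPrime r t j).length := by rw [srPrime_length r t j hj]; exact hm
  have hlen : ((srPrime r t j).insertIdx m x).length = (r+1)*t + j + 1 := by
    rw [List.length_insertIdx_of_le_length hmlen, srPrime_length r t j hj]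
  have hbm : m < ((srPrime r t j).insertIdx m x).length := by rw [hlen]; omega
  have hgm : ((srPrime r t j).insertIdx m x)[m]'hbm = x :=
    List.getElem_insertIdx_self hbm
  rcases le_or_gt m p with hc | hc
  · obtain ⟨c, rfl⟩ : ∃ c, p = m + c := ⟨p - m, by omega⟩
    have hk : m + c < (srPrime r t j).length := by
      rw [srPrime_length r t j hj]; omega
    have hbp : m + c + 1 < ((srPrime r t j).insertIdx m x).length := by rw [hlen]; omega
    have hgp : ((srPrime r t j).insertIdx m x)[m + c + 1]'hbp = x := by
      rw [List.getElem_insertIdx_add_succ (srPrime r t j) x m c hk hbp,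
        srPrime_getElem hj hp, hl]
    have := hs m (m+c+1) (by omega) hbp (by omega)
    apply this
    rw [List.get_eq_getElem, List.get_eq_getElem, hgm, hgp]
  · have hbp : p < ((srPrime r t j).insertIdx m x).length := by rw [hlen]; omega
    have hgp : ((srPrime r t j).insertIdx m x)[p]'hbp = x := by
      rw [List.getElem_insertIdx_of_lt hc hbp,
        srPrime_getElem hj hp, hl]
    have := hs p m hc hbm (by omega)
    apply this
    rw [List.get_eq_getElem, List.get_eq_getElem, hgp, hgm]

lemma avoid_srPrime {α : Type*} [DecidableEq α] (u : List α) (r t j : ℕ)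
    (hr : 3 ≤ r) (ht : 1 ≤ t) (hj : j < r) (hcard : u.toFinset.card = r)
    (havoid : ¬ ContainsCopy (periodicSeg r 0 (r*t + j)) u) :
    ¬ ContainsCopy (srPrime r t j) u := by
  intro hcc
  have hu : u ≠ [] := by
    intro h; rw [h] at hcard; simp at hcard; omega
  rw [srPrime_eq r t j (by omega)] at hcc
  obtain ⟨q, hmono, hlt, hpat⟩ := exists_mod_embedding hu hcc
  have hpig : ∃ y₀, y₀ < r + 1 ∧ ∀ i, q i % (r+1) ≠ y₀ := by
    by_contra hno
    push_neg at hno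
    have hex : ∀ y : ℕ, ∃ i : Fin u.length, y < r + 1 → q i % (r+1) = y := by
      intro y
      rcases Nat.lt_or_ge y (r+1) with hy | hy
      · obtain ⟨i, hi⟩ := hno y hy
        exact ⟨i, fun _ => hi⟩
      · have h0 : 0 < u.length := List.length_pos_iff.2 hu
        exact ⟨⟨0, h0⟩, fun h => absurd h (by omega)⟩
    choose c hc2 using hex
    have hle := Finset.card_le_card_of_injOn (f := fun y => u.get (c y))
      (s := Finset.range (r+1)) (t := u.toFinset)
      (fun y _ => by simp only [Finset.mem_coe, List.mem_toFinset]; exact List.get_mem u _)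
      (fun y1 hy1 y2 hy2 heq => by
        have hy1' : y1 < r + 1 := by simpa using hy1
        have hy2' : y2 < r + 1 := by simpa using hy2
        have h2 := (hpat (c y1) (c y2)).2 heq
        rw [hc2 y1 hy1', hc2 y2 hy2'] at h2
        exact h2)
    rw [hcard, Finset.card_range] at hle
    omega
  obtain ⟨y₀, hy₀, hne⟩ := hpig
  set D : Fin u.length → ℕ := fun i => q i / (r+1) with hD
  set S : Fin u.length → ℕ := fun i => q i % (r+1) with hS
  set σ : Fin u.length → ℕ := fun i => S i - (if y₀ < S i then 1 else 0) with hσdef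
  have hDS : ∀ i, (r+1) * D i + S i = q i := fun i => Nat.div_add_mod _ _
  have hSlt : ∀ i, S i < r + 1 := fun i => Nat.mod_lt _ (by omega)
  have hSq : ∀ i, S i = q i % (r+1) := fun _ => rfl
  have hσ : ∀ i, (y₀ < S i ∧ σ i + 1 = S i) ∨ (S i < y₀ ∧ σ i = S i) := by
    intro i
    have hne' := hne i
    rw [← hSq i] at hne'
    have hSlt' := hSlt i
    simp only [hσdef]
    split
    · left; constructor; assumption; omega
    · right
      constructor
      · omega
      · omega
  have hσlt : ∀ i, σ i < r := by
    intro i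
    rcases hσ i with ⟨h1, h2⟩ | ⟨h1, h2⟩ <;> have := hSlt i <;> omega
  have hσinj : ∀ i k, σ i = σ k ↔ S i = S k := by
    intro i k
    rcases hσ i with ⟨h1, h2⟩ | ⟨h1, h2⟩ <;> rcases hσ k with ⟨h3, h4⟩ | ⟨h3, h4⟩ <;> omega
  apply havoid
  apply containsCopy_of_mod_embedding hu (fun i => r * D i + σ i)
  · intro i k hik
    show r * D i + σ i < r * D k + σ k
    have hq := hmono hik
    have hDle : D i ≤ D k := Nat.div_le_div_right (le_of_lt hq)
    rcases Nat.lt_or_ge (D i) (D k) with hc | hc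
    · have h1 : r * (D i + 1) ≤ r * D k := Nat.mul_le_mul_left r (by omega)
      have h2 : r * (D i + 1) = r * D i + r := by ring
      have := hσlt i
      omega
    · have hDeq : D i = D k := by omega
      have h1 := hDS i
      have h2 := hDS k
      rw [hDeq] at h1 ⊢
      have hSik : S i < S k := by omega
      rcases hσ i with ⟨h3, h4⟩ | ⟨h3, h4⟩ <;> rcases hσ k with ⟨h5, h6⟩ | ⟨h5, h6⟩ <;> omega
  · intro i
    show r * D i + σ i < r * t + j
    have hqlt := hlt i
    have hDS' := hDS i
    have hSlt' := hSlt i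
    have hDt : D i ≤ t := by
      by_contra hcon
      have h1 : (r+1) * (t+1) ≤ (r+1) * D i := Nat.mul_le_mul_left (r+1) (by omega)
      have h2 : (r+1) * (t+1) = (r+1) * t + (r+1) := by ring
      omega
    rcases Nat.lt_or_ge (D i) t with hc | hc
    · have h1 : r * (D i + 1) ≤ r * t := Nat.mul_le_mul_left r (by omega)
      have h2 : r * (D i + 1) = r * D i + r := by ring
      have := hσlt i
      omega
    · have hDeq : D i = t := by omega
      rw [hDeq] at hDS' ⊢
      have h2 : (r+1) * t = r * t + t := by ring
      rcases hσ i with ⟨h3, h4⟩ | ⟨h3, h4⟩ <;> omega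
  · intro i k
    show (r * D i + σ i) % r = (r * D k + σ k) % r ↔ _
    rw [← hpat i k]
    have h1 : (r * D i + σ i) % r = σ i := by
      rw [Nat.mul_add_mod]
      exact Nat.mod_eq_of_lt (hσlt i)
    have h2 : (r * D k + σ k) % r = σ k := by
      rw [Nat.mul_add_mod]
      exact Nat.mod_eq_of_lt (hσlt k)
    rw [h1, h2, hσinj i k, hSq i, hSq k]

lemma contains_insert_front {α : Type*} [DecidableEq α] (u : List α) (r t j m x : ℕ)
    (hr : 3 ≤ r) (ht : 1 ≤ t) (hj : j < r) (hx1 : 1 ≤ x) (hx2 : x ≤ r+1)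
    (hm : m = 0 ∨ (m = 1 ∧ x = r + 1))
    (hu2 : 2 ≤ u.length)
    (h01 : ∀ (h0 : 0 < u.length) (h1 : 1 < u.length), u.get ⟨0, h0⟩ = u.get ⟨1, h1⟩)
    (hmax : ContainsCopy (periodicSeg r 0 (r*t + j + 1)) u) :
    ContainsCopy ((srPrime r t j).insertIdx m x) u := by
  have hu : u ≠ [] := by intro h; rw [h] at hu2; simp at hu2
  obtain ⟨q0, hmono0, hlt0, hpat0⟩ := exists_mod_embedding hu hmax
  have hi0 : (0:ℕ) < u.length := by omega
  have hi1 : (1:ℕ) < u.length := by omega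
  set i0 : Fin u.length := ⟨0, hi0⟩ with hi0d
  set i1 : Fin u.length := ⟨1, hi1⟩ with hi1d
  set K : ℕ := r * (q0 i0 / r) with hK
  have hKle : ∀ i, K ≤ q0 i := by
    intro i
    have h2 := Nat.div_add_mod (q0 i0) r
    have h3 : q0 i0 ≤ q0 i := hmono0.monotone (by simp [hi0d, Fin.le_def])
    omega
  set q : Fin u.length → ℕ := fun i => q0 i - K with hqd
  have hqv : ∀ i, q i + K = q0 i := fun i => Nat.sub_add_cancel (hKle i)
  have hmono : StrictMono q := by
    intro a b hab
    have h0 := hmono0 hab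
    have h1 := hqv a; have h2 := hqv b
    simp only [hqd]
    omega
  have hlt : ∀ i, q i < r*t + j + 1 := fun i => by
    have h0 := hlt0 i; have h1 := hqv i; omega
  have hpat : ∀ i k, (q i % r = q k % r ↔ u.get i = u.get k) := by
    intro i k
    rw [← hpat0 i k]
    constructor
    · intro h
      rw [← hqv i, ← hqv k]
      exact Nat.ModEq.add_right K h
    · intro h
      have h' : q i + K ≡ q k + K [MOD r] := by rw [hqv i, hqv k]; exact h
      exact Nat.ModEq.add_right_cancel' K h'
  have hρ : q i0 < r := by
    have h1 := hqv i0
    have h2 := Nat.div_add_mod (q0 i0) r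
    have h3 : q0 i0 % r < r := Nat.mod_lt _ (by omega)
    omega
  set ρ := q i0 with hρdef
  have h01q : q i1 % r = q i0 % r := (hpat i1 i0).2 (h01 hi0 hi1).symm
  have hq01 : q i0 < q i1 := hmono (by simp [hi0d, hi1d, Fin.lt_def])
  have hq1r : ρ + r ≤ q i1 := by
    have hdvd : r ∣ q i1 - q i0 :=
      (Nat.modEq_iff_dvd' (le_of_lt hq01)).1 h01q.symm
    have h2 := Nat.le_of_dvd (by omega) hdvd
    omega
  -- choice of B
  set B0 := (ρ + r + 2 - x) % (r + 1) with hB0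
  set B := if B0 = 0 then r + 1 else B0 with hB
  have hB0lt : B0 < r + 1 := Nat.mod_lt _ (by omega)
  have hB1 : 1 ≤ B := by rw [hB]; split <;> omega
  have hBle : B ≤ r + 1 := by rw [hB]; split <;> omega
  have hBm : B + m ≤ r + ρ + 1 := by
    rcases hm with h | ⟨h1, h2⟩
    · omega
    · have he : ρ + r + 2 - x = ρ + 1 := by omega
      have hB0v : B0 = ρ + 1 := by
        rw [hB0, he]; exact Nat.mod_eq_of_lt (by omega)
      rw [hB, hB0v]
      have : ¬ (ρ + 1 = 0) := by omega
      rw [if_neg this]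
      omega
  have hkey : (x - 1 + B) % (r + 1) = ρ := by
    rcases eq_or_ne B0 0 with h0 | h0
    · have hdvd : (r+1) ∣ (ρ + r + 2 - x) := Nat.dvd_of_mod_eq_zero h0
      obtain ⟨c, hc⟩ := hdvd
      have hc1 : 1 ≤ c := by
        rcases Nat.eq_zero_or_pos c with h | h
        · rw [h] at hc; omega
        · exact h
      have hc2 : c < 2 := by
        by_contra hcon
        have : (r+1) * 2 ≤ (r+1) * c := Nat.mul_le_mul_left _ (by omega)
        omega
      have hcv : c = 1 := by omega
      rw [hcv] at hc
      have hxρ : x = ρ + 1 := by omega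
      rw [hB, if_pos h0, Nat.add_mod_right]
      rw [hxρ]
      exact Nat.mod_eq_of_lt (by omega)
    · rw [hB, if_neg h0, hB0, Nat.add_mod_mod]
      have e1 : x - 1 + (ρ + r + 2 - x) = ρ + (r + 1) := by omega
      rw [e1, Nat.add_mod_right]
      exact Nat.mod_eq_of_lt (by omega)
  -- definitions of d, s, v
  set d : Fin u.length → ℕ := fun i => q i / r with hdd
  set sf : Fin u.length → ℕ := fun i => q i % r with hsf
  set v : Fin u.length → ℕ := fun i => q i + d i - B with hvd
  have hdm : ∀ i, r * d i + sf i = q i := fun i => Nat.div_add_mod _ _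
  have hslt : ∀ i, sf i < r := fun i => Nat.mod_lt _ (by omega)
  have hsq : ∀ i, sf i = q i % r := fun i => rfl
  have hge1 : ∀ i : Fin u.length, 0 < i.val → ρ + r ≤ q i := by
    intro i hi
    refine le_trans hq1r (hmono.monotone ?_)
    simp [hi1d, Fin.le_def]
    omega
  have hd1 : ∀ i : Fin u.length, 0 < i.val → 1 ≤ d i := by
    intro i hi
    rw [hdd]
    exact (Nat.one_le_div_iff (by omega)).2 (by have := hge1 i hi; omega)
  have hvB : ∀ i : Fin u.length, 0 < i.val → v i + B = q i + d i := by
    intro i hi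
    rw [hvd]
    refine Nat.sub_add_cancel ?_
    have := hge1 i hi
    have := hd1 i hi
    omega
  have hdle : ∀ i, d i ≤ t := by
    intro i
    have h1 := hdm i
    have h2 := hslt i
    have h3 := hlt i
    by_contra hcon
    have h4 : r * (t+1) ≤ r * d i := Nat.mul_le_mul_left _ (by omega)
    have h5 : r * (t+1) = r * t + r := by ring
    omega
  have hvm : ∀ i : Fin u.length, 0 < i.val → m ≤ v i := by
    intro i hi
    have h1 := hvB i hi
    have h2 := hge1 i hi
    have h3 := hd1 i hi
    omega
  have hvlt : ∀ i : Fin u.length, 0 < i.val → v i < (r+1)*t + j := by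
    intro i hi
    have h1 := hvB i hi
    have h2 := hlt i
    have h3 := hdle i
    have h4 : (r+1)*t = r*t + t := by ring
    omega
  have hvmod : ∀ i : Fin u.length, 0 < i.val → (v i + B) % (r+1) = sf i := by
    intro i hi
    have h1 := hvB i hi
    have h2 := hdm i
    have e : v i + B = (r+1) * d i + sf i := by
      have e2 : (r+1) * d i = r * d i + d i := by ring
      omega
    rw [e, Nat.mul_add_mod]
    exact Nat.mod_eq_of_lt (by have := hslt i; omega)
  -- the target list
  have hN1 : r + 1 ≤ (r+1)*t + j := by
    have : (r+1) * 1 ≤ (r+1)*t := Nat.mul_le_mul_left _ ht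
    omega
  have hmN : m ≤ (srPrime r t j).length := by
    rw [srPrime_length r t j (by omega)]
    rcases hm with h | ⟨h, _⟩ <;> omega
  have hwlen : ((srPrime r t j).insertIdx m x).length = (r+1)*t + j + 1 := by
    rw [List.length_insertIdx_of_le_length hmN, srPrime_length r t j (by omega)]
  have hmb : m < ((srPrime r t j).insertIdx m x).length := by
    rw [hwlen]
    rcases hm with h | ⟨h, _⟩ <;> omega
  have hwm : ((srPrime r t j).insertIdx m x).get ⟨m, hmb⟩ = x := by
    rw [List.get_eq_getElem]
    exact List.getElem_insertIdx_self hmb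
  have hbv : ∀ i : Fin u.length, 0 < i.val →
      v i + 1 < ((srPrime r t j).insertIdx m x).length := by
    intro i hi
    rw [hwlen]
    have := hvlt i hi
    omega
  have hwv : ∀ (i : Fin u.length) (hi : 0 < i.val),
      ((srPrime r t j).insertIdx m x).get ⟨v i + 1, hbv i hi⟩ = v i % (r+1) + 1 := by
    intro i hi
    obtain ⟨c, hc⟩ : ∃ c, v i = m + c := ⟨v i - m, by have := hvm i hi; omega⟩
    have hk : m + c < (srPrime r t j).length := by
      rw [srPrime_length r t j (by omega)]
      have := hvlt i hi
      omega
    have hb2 : m + c + 1 < ((srPrime r t j).insertIdx m x).length := by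
      rw [hwlen]
      have := hvlt i hi
      omega
    have h2 : ((srPrime r t j).insertIdx m x)[m + c + 1]'hb2 = (srPrime r t j)[m+c]'hk :=
      List.getElem_insertIdx_add_succ _ _ _ _ hk hb2
    have h3 : (srPrime r t j)[m+c]'hk = (m+c) % (r+1) + 1 :=
      srPrime_getElem (by omega) (by rw [srPrime_length r t j (by omega)] at hk; exact hk)
    rw [List.get_eq_getElem]
    have hc' : v i + 1 = m + c + 1 := by omega
    simp only [hc']
    rw [h2, h3, hc]
  -- assemble the embedding
  apply (containsCopy_iff u _ hu).2
  refine ⟨fun i => if hi : 0 < i.val then ⟨v i + 1, hbv i hi⟩ else ⟨m, hmb⟩, ?_, ?_⟩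
  · intro a b hab
    have hbv' : 0 < b.val := by
      have : a.val < b.val := hab
      omega
    by_cases ha : 0 < a.val
    · simp only [dif_pos ha, dif_pos hbv']
      have h1 := hvB a ha
      have h2 := hvB b hbv'
      have h3 : q a < q b := hmono hab
      have h4 : d a ≤ d b := Nat.div_le_div_right (le_of_lt h3)
      simp only [Fin.mk_lt_mk]
      omega
    · simp only [dif_neg ha, dif_pos hbv']
      simp only [Fin.mk_lt_mk]
      have := hvm b hbv'
      omega
  · intro i k
    have hlettereq : ∀ (a b : Fin u.length) (ha : 0 < a.val) (hb : 0 < b.val),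
        (v a % (r+1) + 1 = v b % (r+1) + 1 ↔ u.get a = u.get b) := by
      intro a b ha hb
      rw [← hpat a b, ← hsq a, ← hsq b]
      constructor
      · intro h
        have h' : v a % (r+1) = v b % (r+1) := by omega
        have := (mod_shift (c := B)).2 h'
        rw [hvmod a ha, hvmod b hb] at this
        exact this
      · intro h
        have h' : (v a + B) % (r+1) = (v b + B) % (r+1) := by
          rw [hvmod a ha, hvmod b hb]; exact h
        have := mod_shift.1 h'
        omega
    have hq0m : q i0 % r = ρ := by rw [hρdef]; exact Nat.mod_eq_of_lt hρ
    have hletterx : ∀ (b : Fin u.length) (hb : 0 < b.val),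
        (x = v b % (r+1) + 1 ↔ u.get i0 = u.get b) := by
      intro b hb
      rw [← hpat i0 b]
      constructor
      · intro h
        have h2 : (x - 1) % (r+1) = v b % (r+1) := by
          have h1 : v b % (r+1) = x - 1 := by omega
          rw [h1]; exact Nat.mod_eq_of_lt (by omega)
        have h3 := (mod_shift (c := B)).2 h2
        rw [hkey, hvmod b hb] at h3
        rw [hq0m, ← hsq b, h3]
      · intro h
        have hsb : sf b = ρ := by rw [hsq b, ← h, hq0m]
        have h4 : (x - 1 + B) % (r+1) = (v b + B) % (r+1) := by
          rw [hkey, hvmod b hb, hsb]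
        have h5 := mod_shift.1 h4
        have h6 : (x-1) % (r+1) = x - 1 := Nat.mod_eq_of_lt (by omega)
        omega
    by_cases hi : 0 < i.val <;> by_cases hk : 0 < k.val
    · simp only [dif_pos hi, dif_pos hk]
      rw [hwv i hi, hwv k hk]
      exact hlettereq i k hi hk
    · have hk0 : k = i0 := by
        apply Fin.ext
        rw [hi0d]
        simp only [Fin.val_mk]
        omega
      simp only [dif_pos hi, dif_neg hk]
      rw [hwv i hi, hwm, hk0]
      constructor
      · intro h
        exact ((hletterx i hi).1 h.symm).symm
      · intro h
        exact ((hletterx i hi).2 h.symm).symm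
    · have hi0' : i = i0 := by
        apply Fin.ext
        rw [hi0d]
        simp only [Fin.val_mk]
        omega
      simp only [dif_neg hi, dif_pos hk]
      rw [hwm, hwv k hk, hi0']
      exact hletterx k hk
    · have hik : i = k := by
        apply Fin.ext
        omega
      subst hik
      simp only [dif_neg hi]

lemma contains_insert_back {α : Type*} [DecidableEq α] (u : List α) (r t j m x : ℕ)
    (hr : 3 ≤ r) (ht : 1 ≤ t) (hj : j < r) (hx1 : 1 ≤ x) (hx2 : x ≤ r+1)
    (hm : m = (r+1)*t + j ∨ (m = (r+1)*t + j - 1 ∧ x = j + 1))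
    (hu2 : 2 ≤ u.length)
    (hlast : ∀ (h0 : u.length - 1 < u.length) (h1 : u.length - 2 < u.length),
       u.get ⟨u.length - 1, h0⟩ = u.get ⟨u.length - 2, h1⟩)
    (hmax : ContainsCopy (periodicSeg r 0 (r*t + j + 1)) u) :
    ContainsCopy ((srPrime r t j).insertIdx m x) u := by
  have hu : u ≠ [] := by intro h; rw [h] at hu2; simp at hu2
  obtain ⟨q0, hmono0, hlt0, hpat0⟩ := exists_mod_embedding hu hmax
  have hiN1 : u.length - 1 < u.length := by omega
  have hiN2 : u.length - 2 < u.length := by omega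
  set iN1 : Fin u.length := ⟨u.length - 1, hiN1⟩ with hiN1d
  set iN2 : Fin u.length := ⟨u.length - 2, hiN2⟩ with hiN2d
  set a : ℕ := (r*t + j) - q0 iN1 with had
  set K : ℕ := r * (a / r) with hK
  set q : Fin u.length → ℕ := fun i => q0 i + K with hqd
  have hqv : ∀ i, q i = q0 i + K := fun i => rfl
  have hmono : StrictMono q := by
    intro a' b hab
    have h0 := hmono0 hab
    simp only [hqd]
    omega
  have htop : ∀ i, q i ≤ q iN1 := by
    intro i
    have : q0 i ≤ q0 iN1 := by
      refine hmono0.monotone ?_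
      rw [hiN1d]
      simp only [Fin.le_def, Fin.val_mk]
      omega
    simp only [hqd]
    omega
  have hadm := Nat.div_add_mod a r
  have hamlt : a % r < r := Nat.mod_lt _ (by omega)
  have hq0N1 : q0 iN1 < r*t + j + 1 := hlt0 iN1
  have hq1lt : q iN1 ≤ r*t + j := by
    rw [hqv iN1, hK]
    omega
  have hq1ge : r*t + j < q iN1 + r := by
    rw [hqv iN1, hK]
    omega
  have hlt : ∀ i, q i ≤ r*t + j := fun i => le_trans (htop i) hq1lt
  have hpat : ∀ i k, (q i % r = q k % r ↔ u.get i = u.get k) := by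
    intro i k
    rw [← hpat0 i k, hqv i, hqv k, hK, Nat.add_mul_mod_self_left, Nat.add_mul_mod_self_left]
  have hN12 : u.get iN1 = u.get iN2 := by
    rw [hiN1d, hiN2d]
    exact hlast hiN1 hiN2
  have hqN12 : q iN1 % r = q iN2 % r := (hpat iN1 iN2).2 hN12
  have hqlt12 : q iN2 < q iN1 := by
    refine hmono ?_
    rw [hiN1d, hiN2d]
    simp only [Fin.lt_def, Fin.val_mk]
    omega
  have hgap : q iN2 + r ≤ q iN1 := by
    have hdvd : r ∣ q iN1 - q iN2 :=
      (Nat.modEq_iff_dvd' (le_of_lt hqlt12)).1 hqN12.symm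
    have h2 := Nat.le_of_dvd (by omega) hdvd
    omega
  set ρ : ℕ := q iN2 % r with hρd
  have hρlt : ρ < r := Nat.mod_lt _ (by omega)
  have hq1m : q iN1 % r = ρ := by rw [hρd, hqN12]
  set B : ℕ := (x + r - ρ) % (r + 1) with hBd
  have hBr : B < r + 1 := Nat.mod_lt _ (by omega)
  have hkey2 : (ρ + B) % (r+1) = x - 1 := by
    rw [hBd, Nat.add_mod_mod]
    have e1 : ρ + (x + r - ρ) = x - 1 + (r + 1) := by omega
    rw [e1, Nat.add_mod_right]
    exact Nat.mod_eq_of_lt (by omega)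
  set d : Fin u.length → ℕ := fun i => q i / r with hdd
  set sf : Fin u.length → ℕ := fun i => q i % r with hsf
  set v : Fin u.length → ℕ := fun i => q i + d i + B with hvd
  have hdm : ∀ i, r * d i + sf i = q i := fun i => Nat.div_add_mod _ _
  have hslt : ∀ i, sf i < r := fun i => Nat.mod_lt _ (by omega)
  have hsq : ∀ i, sf i = q i % r := fun i => rfl
  have hsN2 : sf iN2 = ρ := by rw [hsq, hρd]
  have hvmod : ∀ i, v i % (r+1) = (sf i + B) % (r+1) := by
    intro i
    have h1 := hdm i
    have e : v i = (r+1) * d i + (sf i + B) := by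
      have e2 : (r+1) * d i = r * d i + d i := by ring
      simp only [hvd]
      omega
    rw [e, Nat.mul_add_mod]
  have hdle : ∀ i, i.val ≠ u.length - 1 → d i + 1 ≤ t := by
    intro i hi
    have hile : q i ≤ q iN2 := by
      have : q i ≤ q iN2 := by
        refine hmono.monotone ?_
        rw [hiN2d]
        simp only [Fin.le_def, Fin.val_mk]
        omega
      exact this
    have h1 := hdm i
    have h2 := hslt i
    by_contra hcon
    have h4 : r * t ≤ r * d i := Nat.mul_le_mul_left _ (by omega)
    omega
  have hvle : ∀ i, i.val ≠ u.length - 1 → v i ≤ v iN2 := by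
    intro i hi
    have hile : q i ≤ q iN2 := by
      refine hmono.monotone ?_
      rw [hiN2d]
      simp only [Fin.le_def, Fin.val_mk]
      omega
    have hdile : d i ≤ d iN2 := Nat.div_le_div_right hile
    simp only [hvd]
    omega
  have hN2ne : (iN2 : Fin u.length).val ≠ u.length - 1 := by
    rw [hiN2d]
    simp only [Fin.val_mk]
    omega
  -- the crucial bound : v iN2 < m
  have hcrux : v iN2 < m := by
    have hqN2le : q iN2 + r ≤ r*t + j := le_trans hgap hq1lt
    have hd2 := hdle iN2 hN2ne
    rcases hm with hmv | ⟨hmv, hxv⟩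
    · have e3 : (r+1)*t = r*t + t := by ring
      simp only [hvd]
      omega
    · rcases Nat.lt_or_ge B r with hBc | hBc
      · have e3 : (r+1)*t = r*t + t := by ring
        simp only [hvd]
        omega
      · -- B = r
        have hBeq : B = r := by omega
        have hρj : ρ = j + 1 := by
          have ha1 : j + 1 + r - ρ ≥ j + 2 := by omega
          have ha2 : j + 1 + r - ρ ≤ j + r + 1 := by omega
          have hBv : (j + 1 + r - ρ) % (r+1) = r := by
            rw [← hxv, ← hBd]; exact hBeq
          have hdm2 := Nat.div_add_mod (j + 1 + r - ρ) (r+1)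
          rcases Nat.eq_zero_or_pos ((j + 1 + r - ρ) / (r+1)) with hc | hc
          · rw [hc, Nat.mul_zero] at hdm2
            omega
          · have : (r+1) * 1 ≤ (r+1) * ((j + 1 + r - ρ) / (r+1)) :=
              Nat.mul_le_mul_left _ hc
            omega
        have hsv : r * d iN2 + (j+1) = q iN2 := by
          have := hdm iN2
          rw [hsN2, hρj] at this
          exact this
        have hdt2 : d iN2 + 2 ≤ t := by
          by_contra hcon
          have h4 : r * (t - 1) ≤ r * d iN2 := Nat.mul_le_mul_left _ (by omega)
          have h5 : r * (t-1) + r = r * t := by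
            have e : t - 1 + 1 = t := by omega
            calc r*(t-1) + r = r*((t-1)+1) := by ring
            _ = r*t := by rw [e]
          omega
        have h4 : r * d iN2 + 2 * r ≤ r * t := by
          have := Nat.mul_le_mul_left r hdt2
          have e : r * (d iN2 + 2) = r * d iN2 + 2 * r := by ring
          omega
        have e3 : (r+1)*t = r*t + t := by ring
        simp only [hvd]
        omega
  have hmN : m ≤ (srPrime r t j).length := by
    rw [srPrime_length r t j (by omega)]
    have e3 : (r+1)*t = r*t + t := by ring
    rcases hm with hmv | ⟨hmv, _⟩ <;> omega
  have hwlen : ((srPrime r t j).insertIdx m x).length = (r+1)*t + j + 1 := by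
    rw [List.length_insertIdx_of_le_length hmN, srPrime_length r t j (by omega)]
  have hmb : m < ((srPrime r t j).insertIdx m x).length := by
    rw [hwlen]
    rcases hm with hmv | ⟨hmv, _⟩ <;> omega
  have hwm : ((srPrime r t j).insertIdx m x).get ⟨m, hmb⟩ = x := by
    rw [List.get_eq_getElem]
    exact List.getElem_insertIdx_self hmb
  have hbv : ∀ i : Fin u.length, i.val ≠ u.length - 1 →
      v i < ((srPrime r t j).insertIdx m x).length := by
    intro i hi
    rw [hwlen]
    have h1 := hvle i hi
    have h2 := hcrux
    rw [srPrime_length r t j (by omega)] at hmN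
    omega
  have hwv : ∀ (i : Fin u.length) (hi : i.val ≠ u.length - 1),
      ((srPrime r t j).insertIdx m x).get ⟨v i, hbv i hi⟩ = v i % (r+1) + 1 := by
    intro i hi
    have hvim : v i < m := lt_of_le_of_lt (hvle i hi) hcrux
    have hvN : v i < (r+1)*t + j := by
      rw [srPrime_length r t j (by omega)] at hmN
      omega
    rw [List.get_eq_getElem]
    rw [List.getElem_insertIdx_of_lt hvim (hbv i hi)]
    exact srPrime_getElem (by omega) hvN
  apply (containsCopy_iff u _ hu).2
  refine ⟨fun i => if hi : i.val = u.length - 1 then ⟨m, hmb⟩ else ⟨v i, hbv i hi⟩, ?_, ?_⟩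
  · intro a' b hab
    have hbval : a'.val < b.val := hab
    have ha'ne : a'.val ≠ u.length - 1 := by
      have := b.isLt
      omega
    by_cases hbc : b.val = u.length - 1
    · simp only [dif_neg ha'ne, dif_pos hbc]
      simp only [Fin.mk_lt_mk]
      exact lt_of_le_of_lt (hvle a' ha'ne) hcrux
    · simp only [dif_neg ha'ne, dif_neg hbc]
      simp only [Fin.mk_lt_mk]
      have h3 : q a' < q b := hmono hab
      have h4 : d a' ≤ d b := Nat.div_le_div_right (le_of_lt h3)
      simp only [hvd]
      omega
  · intro i k
    have hlettereq : ∀ (a' b : Fin u.length), a'.val ≠ u.length - 1 → b.val ≠ u.length - 1 →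
        (v a' % (r+1) + 1 = v b % (r+1) + 1 ↔ u.get a' = u.get b) := by
      intro a' b ha' hb
      rw [← hpat a' b, ← hsq a', ← hsq b]
      rw [hvmod a', hvmod b]
      constructor
      · intro h
        have h' : (sf a' + B) % (r + 1) = (sf b + B) % (r+1) := by omega
        have h2 := (mod_shift (c := B)).1 h'
        have := hslt a'; have := hslt b
        rw [Nat.mod_eq_of_lt (by omega), Nat.mod_eq_of_lt (by omega)] at h2
        exact h2
      · intro h
        rw [h]
    have hletterx : ∀ (b : Fin u.length), b.val ≠ u.length - 1 →
        (x = v b % (r+1) + 1 ↔ u.get iN1 = u.get b) := by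
      intro b hb
      rw [← hpat iN1 b, hq1m, ← hsq b, hvmod b]
      constructor
      · intro h
        have h1 : (sf b + B) % (r+1) = x - 1 := by omega
        have h2 : (sf b + B) % (r+1) = (ρ + B) % (r+1) := by rw [h1, hkey2]
        have h3 := (mod_shift (c := B)).1 h2
        have := hslt b
        rw [Nat.mod_eq_of_lt (by omega), Nat.mod_eq_of_lt (by omega)] at h3
        omega
      · intro h
        rw [← h, hkey2]
        omega
    by_cases hi : i.val = u.length - 1 <;> by_cases hk : k.val = u.length - 1
    · have hik : i = k := by apply Fin.ext; omega
      subst hik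
      simp only [dif_pos hi]
    · have hi' : i = iN1 := by
        apply Fin.ext
        rw [hiN1d]
        simp only [Fin.val_mk]
        omega
      simp only [dif_pos hi, dif_neg hk]
      rw [hwm, hwv k hk, hi']
      exact hletterx k hk
    · have hk' : k = iN1 := by
        apply Fin.ext
        rw [hiN1d]
        simp only [Fin.val_mk]
        omega
      simp only [dif_neg hi, dif_pos hk]
      rw [hwm, hwv i hi, hk']
      constructor
      · intro h
        exact ((hletterx i hi).1 h.symm).symm
      · intro h
        exact ((hletterx i hi).2 h.symm).symm
    · simp only [dif_neg hi, dif_neg hk]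
      rw [hwv i hi, hwv k hk]
      exact hlettereq i k hi hk

lemma choose_off (M c x1 : ℕ) (hM : 0 < M) (hx : x1 < M) :
    ∃ o, o < M ∧ (c + o) % M = x1 := by
  refine ⟨(x1 + M - c % M) % M, Nat.mod_lt _ hM, ?_⟩
  have h1 : c % M < M := Nat.mod_lt _ hM
  conv_lhs => rw [← Nat.mod_add_mod, Nat.add_mod_mod]
  have e : c % M + (x1 + M - c % M) = x1 + M := by omega
  rw [e, Nat.add_mod_right]
  exact Nat.mod_eq_of_lt hx


theorem stmt6 {α : Type*} [DecidableEq α] (u : List α)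
    (hr : 3 ≤ u.toFinset.card)
    (hfirst : u[0]? = u[1]?)
    (hlast : u[u.length - 1]? = u[u.length - 2]?)
    (t j : ℕ) (ht : 1 ≤ t) (hj : j < u.toFinset.card)
    -- `s_r(u)` is the periodic segment of length `r·t + j`, i.e. `(a₁⋯a_r)^t a₁⋯a_j`:
    (havoid : ¬ ContainsCopy (periodicSeg u.toFinset.card 0 (u.toFinset.card * t + j)) u)
    (hmax : ContainsCopy (periodicSeg u.toFinset.card 0 (u.toFinset.card * t + j + 1)) u) :
    Saturated u (srPrime u.toFinset.card t j) (Set.Icc 1 (u.toFinset.card + 1)) ∧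
    ∀ i : ℕ, 1 ≤ i → i ≤ u.toFinset.card + 1 →
      ContainsCopy (i :: srPrime u.toFinset.card t j) u ∧
      ContainsCopy (srPrime u.toFinset.card t j ++ [i]) u := by
  set r := u.toFinset.card with hrdef
  have hjr : j ≤ r := le_of_lt hj
  have hulen : 3 ≤ u.length := le_trans hr (List.toFinset_card_le u)
  have hu2 : 2 ≤ u.length := by omega
  have h01 : ∀ (h0 : 0 < u.length) (h1 : 1 < u.length), u.get ⟨0, h0⟩ = u.get ⟨1, h1⟩ := by
    intro h0 h1
    rw [List.getElem?_eq_getElem h0, List.getElem?_eq_getElem h1] at hfirst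
    rw [List.get_eq_getElem, List.get_eq_getElem]
    exact Option.some.inj hfirst
  have hlast' : ∀ (h0 : u.length - 1 < u.length) (h1 : u.length - 2 < u.length),
      u.get ⟨u.length - 1, h0⟩ = u.get ⟨u.length - 2, h1⟩ := by
    intro h0 h1
    rw [List.getElem?_eq_getElem h0, List.getElem?_eq_getElem h1] at hlast
    rw [List.get_eq_getElem, List.get_eq_getElem]
    exact Option.some.inj hlast
  have hN1 : r + 1 ≤ (r+1)*t + j := by
    have : (r+1) * 1 ≤ (r+1)*t := Nat.mul_le_mul_left _ ht
    omega
  have hNmod : ((r+1)*t + j) % (r+1) = j := by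
    rw [Nat.mul_add_mod]
    exact Nat.mod_eq_of_lt (by omega)
  have hfront := fun (m x : ℕ) hx1 hx2 hm =>
    contains_insert_front u r t j m x hr ht hj hx1 hx2 hm hu2 h01 hmax
  have hback := fun (m x : ℕ) hx1 hx2 hm =>
    contains_insert_back u r t j m x hr ht hj hx1 hx2 hm hu2 hlast' hmax
  constructor
  · refine ⟨sparse_srPrime r t j r hjr (by omega), ?_, ?_, ?_⟩
    · exact avoid_srPrime u r t j hr ht hj rfl havoid
    · intro z hz
      simp only [srPrime, periodicSeg, List.mem_append, List.mem_map, List.mem_range] at hz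
      rcases hz with ⟨i, hi, rfl⟩ | ⟨i, hi, rfl⟩
      · have : i % (r+1) < r + 1 := Nat.mod_lt _ (by omega)
        simp only [Set.mem_Icc]
        omega
      · simp only [Set.mem_Icc]
        omega
    · intro x hx m hmlen
      simp only [Set.mem_Icc] at hx
      obtain ⟨hx1, hx2⟩ := hx
      rw [srPrime_length r t j hjr] at hmlen
      by_cases hm0 : m = 0
      · right
        subst hm0
        exact hfront 0 x hx1 hx2 (Or.inl rfl)
      by_cases hmN : m = (r+1)*t + j
      · right
        exact hback m x hx1 hx2 (Or.inl hmN)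
      by_cases hm1 : m = 1
      · by_cases hxr : x = r + 1
        · right
          exact hfront m x hx1 hx2 (Or.inr ⟨hm1, hxr⟩)
        · left
          refine not_sparse_insert_s6 r t j m x (x - 1) hjr (by omega) (by omega) ?_ ?_ ?_
          · rw [Nat.mod_eq_of_lt (by omega)]
            omega
          · omega
          · omega
      by_cases hmN1 : m = (r+1)*t + j - 1
      · by_cases hxj : x = j + 1
        · right
          exact hback m x hx1 hx2 (Or.inr ⟨hmN1, hxj⟩)
        · left
          obtain ⟨o, ho1, ho2⟩ := choose_off (r+1) ((r+1)*t + j - r) (x - 1) (by omega)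
            (by omega)
          set p := (r+1)*t + j - r + o with hpd
          have hpmod : p % (r+1) = x - 1 := ho2
          have hpneN : p ≠ (r+1)*t + j := by
            intro hPN
            rw [hPN, hNmod] at hpmod
            omega
          refine not_sparse_insert_s6 r t j m x p hjr (by omega) (by omega) ?_ ?_ ?_
          · rw [hpmod]; omega
          · omega
          · omega
      · -- interior
        left
        obtain ⟨o, ho1, ho2⟩ := choose_off (r+1) (min (m - 2) ((r+1)*t + j - 1 - r)) (x - 1)
          (by omega) (by omega)
        set c := min (m - 2) ((r+1)*t + j - 1 - r) with hcd
        have hc1 : c ≤ m - 2 := min_le_left _ _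
        have hc2 : c ≤ (r+1)*t + j - 1 - r := min_le_right _ _
        have hc3 : m - r + 1 ≤ c + 1 := by
          rw [hcd]
          omega
        set p := c + o with hpd
        refine not_sparse_insert_s6 r t j m x p hjr (by omega) (by omega) ?_ ?_ ?_
        · rw [hpd, ho2]; omega
        · omega
        · omega
  · intro x hx1 hx2
    constructor
    · have h := hfront 0 x hx1 hx2 (Or.inl rfl)
      rwa [List.insertIdx_zero] at h
    · have h := hback ((r+1)*t + j) x hx1 hx2 (Or.inl rfl)
      have e : (srPrime r t j).insertIdx ((r+1)*t + j) x = srPrime r t j ++ [x] := by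
        rw [← srPrime_length r t j hjr]
        exact List.insertIdx_length_self
      rwa [e] at h
end
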